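/- arXiv:1404.7409 — 4 statements merged into one kernel-verified Lean document; each statement's English description precedes it below -/
import Mathlib

section
/- Fix 0 < q < 1 and θ > 0. For real X > 0 and real Y, with f_0 as above, d/dY Re[f_0(X+iY)] = -sin(Y log q) · log(q) · Σ_{k=0}^∞ q^{X+k} ( 1/(1-q^{θ+k})^2 - 1/|1 - q^{X+iY+k}|^2 ). -/
open Complex Real

/-- The infinite q-Pochhammer symbol `(a; q)_∞ = ∏_{k=0}^∞ (1 - a q^k)`. -/
noncomputable def qPoch (a q : ℂ) : ℂ := ∏' k : ℕ, (1 - a * q ^ k)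

/-- The q-Gamma function `Γ_q(z) = (1-q)^{1-z} (q;q)_∞ / (q^z;q)_∞`. -/
noncomputable def qGamma (q : ℝ) (z : ℂ) : ℂ :=
  ((1 - q : ℂ)) ^ ((1 : ℂ) - z) * qPoch (q : ℂ) (q : ℂ) / qPoch ((q : ℂ) ^ z) (q : ℂ)

/-- The q-digamma function `Ψ_q(z) = d/dz log Γ_q(z)`. -/
noncomputable def qDigamma (q : ℝ) (z : ℂ) : ℂ :=
  deriv (fun w => Complex.log (qGamma q w)) z

/-- `κ(q,θ) = Ψ'_q(θ) / ((log q)^2 q^θ)`. -/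
noncomputable def kappaC (q θ : ℝ) : ℂ :=
  deriv (qDigamma q) (θ : ℂ) / (((Real.log q : ℂ)) ^ 2 * (q : ℂ) ^ (θ : ℂ))

/-- `f(q,θ) = Ψ'_q(θ)/(log q)^2 - Ψ_q(θ)/log q - log(1-q)/log q`. -/
noncomputable def fC (q θ : ℝ) : ℂ :=
  deriv (qDigamma q) (θ : ℂ) / ((Real.log q : ℂ)) ^ 2
    - qDigamma q (θ : ℂ) / (Real.log q : ℂ)
    - (Real.log (1 - q) : ℂ) / (Real.log q : ℂ)

/-- `f₀(Z) = -f (log q) Z + κ q^Z + log((q^Z; q)_∞)`. -/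
noncomputable def f0 (q θ : ℝ) (Z : ℂ) : ℂ :=
  -fC q θ * (Real.log q : ℂ) * Z + kappaC q θ * (q : ℂ) ^ Z
    + Complex.log (qPoch ((q : ℂ) ^ Z) (q : ℂ))


namespace F0Aux

variable {q : ℝ}

lemma hqC (hq0 : 0 < q) : (q : ℂ) ≠ 0 := by exact_mod_cast hq0.ne'

lemma cpow_eq_exp (hq0 : 0 < q) (z : ℂ) :
    (q : ℂ) ^ z = Complex.exp ((Real.log q : ℂ) * z) := by
  rw [Complex.cpow_def_of_ne_zero (hqC hq0), Complex.ofReal_log hq0.le]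

lemma abs_qpow (hq0 : 0 < q) (z : ℂ) : ‖(q : ℂ) ^ z‖ = q ^ z.re :=
  Complex.norm_cpow_eq_rpow_re_of_pos hq0 z

lemma hasDerivAt_qpow (hq0 : 0 < q) (z : ℂ) :
    HasDerivAt (fun w : ℂ => (q : ℂ) ^ w) ((Real.log q : ℂ) * (q : ℂ) ^ z) z := by
  have h : ∀ w : ℂ, (q : ℂ) ^ w = Complex.exp ((Real.log q : ℂ) * w) :=
    fun w => cpow_eq_exp hq0 w
  simp only [h]
  have := (Complex.hasDerivAt_exp ((Real.log q : ℂ) * z)).comp z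
      ((hasDerivAt_id z).const_mul (Real.log q : ℂ))
  simpa [Function.comp_def, mul_comm] using this

/-- `U k z = q^(z+k)` -/
noncomputable def U (q : ℝ) (k : ℕ) (z : ℂ) : ℂ := (q : ℂ) ^ (z + (k : ℂ))

lemma abs_U (hq0 : 0 < q) (k : ℕ) (z : ℂ) :
    ‖U q k z‖ = q ^ z.re * q ^ (k : ℝ) := by
  rw [U, abs_qpow hq0]
  simp [Real.rpow_add hq0]

lemma abs_U_le (hq0 : 0 < q) (hq1 : q < 1) {c : ℝ} {z : ℂ} (hc : c ≤ z.re) (k : ℕ) :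
    ‖U q k z‖ ≤ q ^ c * q ^ (k : ℝ) := by
  rw [abs_U hq0]
  have : q ^ z.re ≤ q ^ c := Real.rpow_le_rpow_of_exponent_ge hq0 hq1.le hc
  exact mul_le_mul_of_nonneg_right this (Real.rpow_nonneg hq0.le _)

lemma abs_U_le' (hq0 : 0 < q) (hq1 : q < 1) {c : ℝ} {z : ℂ} (hc : c ≤ z.re) (k : ℕ) :
    ‖U q k z‖ ≤ q ^ c := by
  refine (abs_U_le hq0 hq1 hc k).trans ?_
  nth_rewrite 2 [show q ^ c = q ^ c * 1 by ring]
  exact mul_le_mul_of_nonneg_left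
    (Real.rpow_le_one hq0.le hq1.le (Nat.cast_nonneg k)) (Real.rpow_nonneg hq0.le _)

lemma abs_U_lt_one (hq0 : 0 < q) (hq1 : q < 1) {z : ℂ} (hz : 0 < z.re) (k : ℕ) :
    ‖U q k z‖ < 1 := by
  refine (abs_U_le' hq0 hq1 le_rfl k).trans_lt ?_
  exact Real.rpow_lt_one hq0.le hq1 hz

lemma one_sub_U_re_pos (hq0 : 0 < q) (hq1 : q < 1) {z : ℂ} (hz : 0 < z.re) (k : ℕ) :
    0 < (1 - U q k z).re := by
  have h1 : (U q k z).re < 1 := lt_of_le_of_lt (Complex.re_le_norm _) (abs_U_lt_one hq0 hq1 hz k)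
  simpa using sub_pos.mpr h1

lemma one_sub_U_mem (hq0 : 0 < q) (hq1 : q < 1) {z : ℂ} (hz : 0 < z.re) (k : ℕ) :
    1 - U q k z ∈ Complex.slitPlane := Or.inl (one_sub_U_re_pos hq0 hq1 hz k)

lemma one_sub_U_ne (hq0 : 0 < q) (hq1 : q < 1) {z : ℂ} (hz : 0 < z.re) (k : ℕ) :
    1 - U q k z ≠ 0 := Complex.slitPlane_ne_zero (one_sub_U_mem hq0 hq1 hz k)

lemma abs_one_sub_U_ge (hq0 : 0 < q) (hq1 : q < 1) {c : ℝ} {z : ℂ} (hc : c ≤ z.re) (k : ℕ) :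
    1 - q ^ c ≤ ‖1 - U q k z‖ := by
  have h := abs_U_le' hq0 hq1 hc k
  calc 1 - q ^ c ≤ 1 - ‖U q k z‖ := by linarith
    _ ≤ ‖1 - U q k z‖ := by
        simpa using norm_sub_norm_le (1 : ℂ) (U q k z)

/-- term of the log series -/
noncomputable def T (q : ℝ) (k : ℕ) (z : ℂ) : ℂ := Complex.log (1 - U q k z)
noncomputable def T' (q : ℝ) (k : ℕ) (z : ℂ) : ℂ :=
  -(Real.log q : ℂ) * (U q k z / (1 - U q k z))
noncomputable def T'' (q : ℝ) (k : ℕ) (z : ℂ) : ℂ :=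
  -(Real.log q : ℂ) ^ 2 * (U q k z / (1 - U q k z) ^ 2)

lemma hasDerivAt_U (hq0 : 0 < q) (k : ℕ) (z : ℂ) :
    HasDerivAt (U q k) ((Real.log q : ℂ) * U q k z) z := by
  have h := (hasDerivAt_qpow hq0 (z + (k : ℂ))).comp z ((hasDerivAt_id z).add_const (k : ℂ))
  delta U
  simpa [Function.comp_def] using h

lemma hasDerivAt_one_sub_U (hq0 : 0 < q) (k : ℕ) (z : ℂ) :
    HasDerivAt (fun w => 1 - U q k w) (-((Real.log q : ℂ) * U q k z)) z :=
  (hasDerivAt_U hq0 k z).const_sub 1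

lemma hasDerivAt_T (hq0 : 0 < q) (hq1 : q < 1) {z : ℂ} (hz : 0 < z.re) (k : ℕ) :
    HasDerivAt (T q k) (T' q k z) z := by
  have h := (Complex.hasDerivAt_log (one_sub_U_mem hq0 hq1 hz k)).comp z
    (hasDerivAt_one_sub_U hq0 k z)
  have : (1 - U q k z)⁻¹ * -((Real.log q : ℂ) * U q k z) = T' q k z := by
    rw [T', div_eq_mul_inv]; ring
  delta T
  simpa [Function.comp_def, this] using h

lemma hasDerivAt_T' (hq0 : 0 < q) (hq1 : q < 1) {z : ℂ} (hz : 0 < z.re) (k : ℕ) :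
    HasDerivAt (T' q k) (T'' q k z) z := by
  have hne := one_sub_U_ne hq0 hq1 hz k
  have h := ((hasDerivAt_U hq0 k z).div (hasDerivAt_one_sub_U hq0 k z) hne).const_mul
    (-(Real.log q : ℂ))
  have heq : -(Real.log q : ℂ) *
      (((Real.log q : ℂ) * U q k z * (1 - U q k z) -
        U q k z * -((Real.log q : ℂ) * U q k z)) / (1 - U q k z) ^ 2) = T'' q k z := by
    rw [T'', ← mul_div_assoc, ← mul_div_assoc]
    congr 1
    ring
  exact heq ▸ h

lemma norm_T'_le (hq0 : 0 < q) (hq1 : q < 1) {c : ℝ} (hc0 : 0 < c) {z : ℂ}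
    (hc : c ≤ z.re) (k : ℕ) :
    ‖T' q k z‖ ≤ |Real.log q| * (q ^ c * q ^ (k : ℝ) / (1 - q ^ c)) := by
  have hqc1 : q ^ c < 1 := Real.rpow_lt_one hq0.le hq1 hc0
  have hd : (0:ℝ) < 1 - q ^ c := by linarith
  have h1 : ‖U q k z‖ ≤ q ^ c * q ^ (k : ℝ) := abs_U_le hq0 hq1 hc k
  have h2 : 1 - q ^ c ≤ ‖1 - U q k z‖ := abs_one_sub_U_ge hq0 hq1 hc k
  have habs : ‖T' q k z‖ = |Real.log q| * (‖U q k z‖ / ‖1 - U q k z‖) := by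
    simp [T', map_div₀, Complex.norm_real]
  rw [habs]
  refine mul_le_mul_of_nonneg_left ?_ (abs_nonneg _)
  exact div_le_div₀ (by positivity) h1 hd h2

lemma norm_T''_le (hq0 : 0 < q) (hq1 : q < 1) {c : ℝ} (hc0 : 0 < c) {z : ℂ}
    (hc : c ≤ z.re) (k : ℕ) :
    ‖T'' q k z‖ ≤ (Real.log q) ^ 2 * (q ^ c * q ^ (k : ℝ) / (1 - q ^ c) ^ 2) := by
  have hqc1 : q ^ c < 1 := Real.rpow_lt_one hq0.le hq1 hc0
  have hd : (0:ℝ) < 1 - q ^ c := by linarith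
  have h1 : ‖U q k z‖ ≤ q ^ c * q ^ (k : ℝ) := abs_U_le hq0 hq1 hc k
  have h2 : 1 - q ^ c ≤ ‖1 - U q k z‖ := abs_one_sub_U_ge hq0 hq1 hc k
  have h2' : (1 - q ^ c) ^ 2 ≤ ‖1 - U q k z‖ ^ 2 := by
    exact pow_le_pow_left₀ hd.le h2 2
  have habs : ‖T'' q k z‖ =
      (Real.log q) ^ 2 * (‖U q k z‖ / ‖1 - U q k z‖ ^ 2) := by
    simp [T'', map_div₀, Complex.norm_real, map_pow]
  rw [habs]
  refine mul_le_mul_of_nonneg_left ?_ (sq_nonneg _)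
  exact div_le_div₀ (by positivity) h1 (by positivity) h2'

lemma summable_geom_aux (hq0 : 0 < q) (hq1 : q < 1) (A : ℝ) :
    Summable (fun k : ℕ => A * q ^ (k : ℝ)) := by
  have : Summable (fun k : ℕ => q ^ k) := summable_geometric_of_lt_one hq0.le hq1
  simpa [Real.rpow_natCast] using this.mul_left A

lemma summable_U (hq0 : 0 < q) (hq1 : q < 1) (z : ℂ) : Summable (fun k => U q k z) := by
  refine Summable.of_norm ?_
  have := summable_geom_aux hq0 hq1 (q ^ z.re)
  refine this.congr fun k => ?_
  rw [← abs_U hq0]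

lemma summable_T (hq0 : 0 < q) (hq1 : q < 1) (z : ℂ) : Summable (fun k => T q k z) := by
  simpa [T] using (summable_U hq0 hq1 z).clog_one_sub

lemma summable_T' (hq0 : 0 < q) (hq1 : q < 1) {c : ℝ} (hc0 : 0 < c) {z : ℂ} (hc : c ≤ z.re) :
    Summable (fun k => T' q k z) := by
  have hs : Summable (fun k : ℕ => |Real.log q| * (q ^ c / (1 - q ^ c)) * q ^ (k:ℝ)) :=
    summable_geom_aux hq0 hq1 _
  refine Summable.of_norm_bounded hs (fun k => ?_)
  calc ‖T' q k z‖ ≤ |Real.log q| * (q ^ c * q ^ (k:ℝ) / (1 - q ^ c)) :=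
      norm_T'_le hq0 hq1 hc0 hc k
    _ = |Real.log q| * (q ^ c / (1 - q ^ c)) * q ^ (k:ℝ) := by ring


/-- `S1 q z = ∑ log(1 - q^(z+k))` -/
noncomputable def S1 (q : ℝ) (z : ℂ) : ℂ := ∑' k : ℕ, T q k z

lemma qPoch_eq (hq0 : 0 < q) (z : ℂ) :
    qPoch ((q : ℂ) ^ z) (q : ℂ) = ∏' k : ℕ, (1 - U q k z) := by
  unfold qPoch U
  congr 1
  funext k
  rw [← Complex.cpow_natCast, ← Complex.cpow_add _ _ (hqC hq0)]

lemma qPoch_eq_exp (hq0 : 0 < q) (hq1 : q < 1) {z : ℂ} (hz : 0 < z.re) :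
    qPoch ((q : ℂ) ^ z) (q : ℂ) = Complex.exp (S1 q z) := by
  rw [qPoch_eq hq0 z]
  have h2 := Complex.cexp_tsum_eq_tprod (f := fun k => 1 - U q k z)
    (fun k => one_sub_U_ne hq0 hq1 hz k)
    (summable_T hq0 hq1 z)
  simpa [S1, T, Function.comp_def] using h2.symm

/-- `H q z` : entire branch of `log (qGamma q z)` on `re z > 0`. -/
noncomputable def Hf (q : ℝ) (z : ℂ) : ℂ :=
  (Real.log (1 - q) : ℂ) * (1 - z) + S1 q 1 - S1 q z

lemma qGamma_eq_exp (hq0 : 0 < q) (hq1 : q < 1) {z : ℂ} (hz : 0 < z.re) :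
    qGamma q z = Complex.exp (Hf q z) := by
  have h1q : (0:ℝ) < 1 - q := by linarith
  have hb : ((1 : ℂ) - (q:ℂ)) = (((1 - q : ℝ)) : ℂ) := by push_cast; ring
  have h1 : ((1 : ℂ) - (q:ℂ)) ^ ((1:ℂ) - z)
      = Complex.exp ((Real.log (1 - q) : ℂ) * (1 - z)) := by
    rw [hb, Complex.cpow_def_of_ne_zero (by exact_mod_cast h1q.ne'),
      ← Complex.ofReal_log h1q.le]
  have h2 : qPoch (q : ℂ) (q : ℂ) = Complex.exp (S1 q 1) := by
    have := qPoch_eq_exp hq0 hq1 (z := 1) (by norm_num)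
    simpa using this
  have h3 : qPoch ((q : ℂ) ^ z) (q : ℂ) = Complex.exp (S1 q z) := qPoch_eq_exp hq0 hq1 hz
  rw [qGamma, h1, h2, h3, ← Complex.exp_add, ← Complex.exp_sub, Hf]

lemma q_rpow_lt_one (hq0 : 0 < q) (hq1 : q < 1) {t : ℝ} (ht : 0 < t) : q ^ t < 1 :=
  Real.rpow_lt_one hq0.le hq1 ht

lemma U_real (hq0 : 0 < q) (x : ℝ) (k : ℕ) :
    U q k (x : ℂ) = ((q ^ (x + k) : ℝ) : ℂ) := by
  rw [U, show ((x:ℂ) + (k:ℂ)) = (((x + k : ℝ)) : ℂ) by push_cast; ring,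
    ← Complex.ofReal_cpow hq0.le]

lemma T_real (hq0 : 0 < q) (hq1 : q < 1) {x : ℝ} (hx : 0 < x) (k : ℕ) :
    T q k (x : ℂ) = ((Real.log (1 - q ^ (x + k)) : ℝ) : ℂ) := by
  have hlt : q ^ (x + k) < 1 := q_rpow_lt_one hq0 hq1 (by positivity)
  rw [T, U_real hq0, show (1 : ℂ) - ((q ^ (x + k) : ℝ) : ℂ) = (((1 - q ^ (x + k) : ℝ)) : ℂ) by
    push_cast; ring, ← Complex.ofReal_log (by linarith)]

lemma T'_real (hq0 : 0 < q) (x : ℝ) (k : ℕ) :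
    T' q k (x : ℂ) = ((-(Real.log q) * (q ^ (x + k) / (1 - q ^ (x + k))) : ℝ) : ℂ) := by
  rw [T', U_real hq0]
  push_cast
  ring

lemma T''_real (hq0 : 0 < q) (x : ℝ) (k : ℕ) :
    T'' q k (x : ℂ) = ((-(Real.log q) ^ 2 * (q ^ (x + k) / (1 - q ^ (x + k)) ^ 2) : ℝ) : ℂ) := by
  rw [T'', U_real hq0]
  push_cast
  ring

lemma S1_real (hq0 : 0 < q) (hq1 : q < 1) {x : ℝ} (hx : 0 < x) :
    S1 q (x : ℂ) = ((∑' k : ℕ, Real.log (1 - q ^ (x + k)) : ℝ) : ℂ) := by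
  rw [S1, Complex.ofReal_tsum]
  exact tsum_congr fun k => T_real hq0 hq1 hx k


lemma hasDerivAt_S1 (hq0 : 0 < q) (hq1 : q < 1) {c : ℝ} (hc0 : 0 < c) {z : ℂ}
    (hz : c < z.re) : HasDerivAt (S1 q) (∑' k : ℕ, T' q k z) z := by
  have hqc1 : q ^ c < 1 := q_rpow_lt_one hq0 hq1 hc0
  refine hasDerivAt_tsum_of_isPreconnected
    (u := fun k : ℕ => |Real.log q| * (q ^ c * q ^ (k:ℝ) / (1 - q ^ c)))
    (t := {w : ℂ | c < w.re}) ?_ ?_ ?_ ?_ ?_ (y₀ := ((c + 1 : ℝ) : ℂ)) ?_ ?_ hz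
  · have hs : Summable (fun k : ℕ => |Real.log q| * (q ^ c / (1 - q ^ c)) * q ^ (k:ℝ)) :=
      summable_geom_aux hq0 hq1 _
    exact hs.congr fun k => by ring
  · exact isOpen_lt continuous_const Complex.continuous_re
  · exact (convex_halfSpace_re_gt c).isPreconnected
  · intro k y hy
    exact hasDerivAt_T hq0 hq1 (hc0.trans hy) k
  · intro k y hy
    exact norm_T'_le hq0 hq1 hc0 (le_of_lt hy) k
  · simp [hc0]
  · exact summable_T hq0 hq1 _

lemma hasDerivAt_S1' (hq0 : 0 < q) (hq1 : q < 1) {c : ℝ} (hc0 : 0 < c) {z : ℂ}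
    (hz : c < z.re) :
    HasDerivAt (fun w => ∑' k : ℕ, T' q k w) (∑' k : ℕ, T'' q k z) z := by
  have hqc1 : q ^ c < 1 := q_rpow_lt_one hq0 hq1 hc0
  refine hasDerivAt_tsum_of_isPreconnected
    (u := fun k : ℕ => (Real.log q) ^ 2 * (q ^ c * q ^ (k:ℝ) / (1 - q ^ c) ^ 2))
    (t := {w : ℂ | c < w.re}) ?_ ?_ ?_ ?_ ?_ (y₀ := ((c + 1 : ℝ) : ℂ)) ?_ ?_ hz
  · have hs : Summable (fun k : ℕ => (Real.log q) ^ 2 * (q ^ c / (1 - q ^ c) ^ 2) * q ^ (k:ℝ)) :=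
      summable_geom_aux hq0 hq1 _
    exact hs.congr fun k => by ring
  · exact isOpen_lt continuous_const Complex.continuous_re
  · exact (convex_halfSpace_re_gt c).isPreconnected
  · intro k y hy
    exact hasDerivAt_T' hq0 hq1 (hc0.trans hy) k
  · intro k y hy
    exact norm_T''_le hq0 hq1 hc0 (le_of_lt hy) k
  · simp [hc0]
  · exact summable_T' hq0 hq1 hc0 (z := ((c+1:ℝ):ℂ)) (by simp)

lemma hasDerivAt_Hf (hq0 : 0 < q) (hq1 : q < 1) {c : ℝ} (hc0 : 0 < c) {z : ℂ}
    (hz : c < z.re) :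
    HasDerivAt (Hf q) (-(Real.log (1 - q) : ℂ) - ∑' k : ℕ, T' q k z) z := by
  have h1 : HasDerivAt (fun w : ℂ => (Real.log (1 - q) : ℂ) * (1 - w) + S1 q 1)
      (-(Real.log (1 - q) : ℂ)) z := by
    simpa using (((hasDerivAt_id z).const_sub 1).const_mul (Real.log (1 - q) : ℂ)).add_const
      (S1 q 1)
  exact h1.sub (hasDerivAt_S1 hq0 hq1 hc0 hz)

lemma Hf_real_im (hq0 : 0 < q) (hq1 : q < 1) {x : ℝ} (hx : 0 < x) :
    (Hf q (x : ℂ)).im = 0 := by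
  have h1 : S1 q 1 = ((∑' k : ℕ, Real.log (1 - q ^ ((1:ℝ) + k)) : ℝ) : ℂ) := by
    simpa using S1_real hq0 hq1 (x := 1) one_pos
  rw [Hf, S1_real hq0 hq1 hx, h1,
    show ((1:ℂ) - (x:ℂ)) = (((1 - x : ℝ)) : ℂ) by push_cast; ring]
  simp [← Complex.ofReal_mul, ← Complex.ofReal_add, ← Complex.ofReal_sub]

lemma eventually_log_qGamma (hq0 : 0 < q) (hq1 : q < 1) {θ : ℝ} (hθ : 0 < θ) :
    ∀ᶠ z in nhds (θ : ℂ), Complex.log (qGamma q z) = Hf q z := by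
  have hcont : ContinuousAt (fun z => (Hf q z).im) (θ : ℂ) := by
    have hd : HasDerivAt (Hf q) _ (θ : ℂ) :=
      hasDerivAt_Hf hq0 hq1 (half_pos hθ) (by simpa using half_lt_self hθ)
    exact (Complex.continuous_im.continuousAt).comp hd.continuousAt
  have h0 : (Hf q (θ : ℂ)).im = 0 := Hf_real_im hq0 hq1 hθ
  have hball : ∀ᶠ z in nhds (θ : ℂ), (Hf q z).im ∈ Set.Ioo (-Real.pi) Real.pi := by
    refine hcont.eventually_mem ?_
    rw [h0]
    exact Ioo_mem_nhds (neg_neg_iff_pos.mpr Real.pi_pos) Real.pi_pos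
  have hre : ∀ᶠ z in nhds (θ : ℂ), 0 < z.re := by
    have : ContinuousAt Complex.re (θ : ℂ) := Complex.continuous_re.continuousAt
    refine this.eventually_mem ?_
    simp only [Complex.ofReal_re]
    exact Ioi_mem_nhds hθ
  filter_upwards [hball, hre] with z hz1 hz2
  rw [qGamma_eq_exp hq0 hq1 hz2, Complex.log_exp hz1.1 hz1.2.le]

lemma eventually_qDigamma (hq0 : 0 < q) (hq1 : q < 1) {θ : ℝ} (hθ : 0 < θ) :
    ∀ᶠ z in nhds (θ : ℂ),
      qDigamma q z = -(Real.log (1 - q) : ℂ) - ∑' k : ℕ, T' q k z := by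
  have h1 := (eventually_log_qGamma hq0 hq1 hθ).eventually_nhds
  have hre : ∀ᶠ z in nhds (θ : ℂ), θ / 2 < z.re := by
    have : ContinuousAt Complex.re (θ : ℂ) := Complex.continuous_re.continuousAt
    refine this.eventually_mem ?_
    simp only [Complex.ofReal_re]
    exact Ioi_mem_nhds (by linarith)
  filter_upwards [h1, hre] with z hz1 hz2
  have heq : deriv (fun w => Complex.log (qGamma q w)) z = deriv (Hf q) z :=
    Filter.EventuallyEq.deriv_eq hz1
  rw [qDigamma, heq, (hasDerivAt_Hf hq0 hq1 (half_pos hθ) hz2).deriv]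

lemma deriv_qDigamma_eq (hq0 : 0 < q) (hq1 : q < 1) {θ : ℝ} (hθ : 0 < θ) :
    deriv (qDigamma q) (θ : ℂ) = -∑' k : ℕ, T'' q k (θ : ℂ) := by
  have h1 : deriv (qDigamma q) (θ : ℂ)
      = deriv (fun z => -(Real.log (1 - q) : ℂ) - ∑' k : ℕ, T' q k z) (θ : ℂ) :=
    Filter.EventuallyEq.deriv_eq (eventually_qDigamma hq0 hq1 hθ)
  rw [h1]
  have h2 : HasDerivAt (fun z => -(Real.log (1 - q) : ℂ) - ∑' k : ℕ, T' q k z)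
      (-∑' k : ℕ, T'' q k (θ : ℂ)) (θ : ℂ) := by
    simpa using (hasDerivAt_S1' hq0 hq1 (half_pos hθ)
      (z := (θ : ℂ)) (by simpa using half_lt_self hθ)).const_sub (-(Real.log (1 - q) : ℂ))
  exact h2.deriv


lemma logq_ne (hq0 : 0 < q) (hq1 : q < 1) : Real.log q ≠ 0 :=
  ne_of_lt (Real.log_neg hq0 hq1)

lemma summable_ratio (hq0 : 0 < q) (hq1 : q < 1) {θ : ℝ} (hθ : 0 < θ) :
    Summable (fun k : ℕ => q ^ (θ + (k:ℝ)) / (1 - q ^ (θ + (k:ℝ))) ^ 2) := by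
  have hqθ : q ^ θ < 1 := q_rpow_lt_one hq0 hq1 hθ
  refine Summable.of_nonneg_of_le (fun k => ?_) (fun k => ?_)
    (summable_geom_aux hq0 hq1 (q ^ θ / (1 - q ^ θ) ^ 2))
  · have h1 : q ^ (θ + (k:ℝ)) < 1 := q_rpow_lt_one hq0 hq1 (by positivity)
    positivity
  · have hle : q ^ (θ + (k:ℝ)) ≤ q ^ θ := by
      rw [Real.rpow_add hq0]
      nth_rewrite 2 [show q ^ θ = q ^ θ * 1 by ring]
      exact mul_le_mul_of_nonneg_left
        (Real.rpow_le_one hq0.le hq1.le (Nat.cast_nonneg k)) (Real.rpow_nonneg hq0.le _)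
    have h2 : 1 - q ^ θ ≤ 1 - q ^ (θ + (k:ℝ)) := by linarith
    have h3 : (0:ℝ) < 1 - q ^ θ := by linarith
    calc q ^ (θ + (k:ℝ)) / (1 - q ^ (θ + (k:ℝ))) ^ 2
        ≤ q ^ (θ + (k:ℝ)) / (1 - q ^ θ) ^ 2 :=
          div_le_div_of_nonneg_left (by positivity) (by positivity)
            (pow_le_pow_left₀ h3.le h2 2)
      _ ≤ q ^ θ / (1 - q ^ θ) ^ 2 * q ^ (k:ℝ) :=
          le_of_eq (by rw [Real.rpow_add hq0]; ring)

lemma deriv_qDigamma_real (hq0 : 0 < q) (hq1 : q < 1) {θ : ℝ} (hθ : 0 < θ) :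
    deriv (qDigamma q) (θ : ℂ)
      = (((Real.log q) ^ 2 * ∑' k : ℕ, q ^ (θ + (k:ℝ)) / (1 - q ^ (θ + (k:ℝ))) ^ 2 : ℝ) : ℂ) := by
  rw [deriv_qDigamma_eq hq0 hq1 hθ]
  have h1 : (∑' k : ℕ, T'' q k (θ : ℂ))
      = ((∑' k : ℕ, -(Real.log q) ^ 2 * (q ^ (θ + (k:ℝ)) / (1 - q ^ (θ + (k:ℝ))) ^ 2) : ℝ) : ℂ) := by
    rw [Complex.ofReal_tsum]
    exact tsum_congr fun k => by
      simpa using T''_real hq0 θ k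
  rw [h1, ← Complex.ofReal_neg]
  congr 1
  rw [tsum_mul_left]
  ring

lemma qDigamma_real (hq0 : 0 < q) (hq1 : q < 1) {θ : ℝ} (hθ : 0 < θ) :
    qDigamma q (θ : ℂ)
      = ((-Real.log (1 - q) - ∑' k : ℕ,
          -(Real.log q) * (q ^ (θ + (k:ℝ)) / (1 - q ^ (θ + (k:ℝ)))) : ℝ) : ℂ) := by
  have h := (eventually_qDigamma hq0 hq1 hθ).self_of_nhds
  rw [h]
  have h1 : (∑' k : ℕ, T' q k (θ : ℂ))
      = ((∑' k : ℕ, -(Real.log q) * (q ^ (θ + (k:ℝ)) / (1 - q ^ (θ + (k:ℝ)))) : ℝ) : ℂ) := by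
    rw [Complex.ofReal_tsum]
    exact tsum_congr fun k => by simpa using T'_real hq0 θ k
  rw [h1]
  push_cast
  ring

lemma kappaC_eq (hq0 : 0 < q) (hq1 : q < 1) {θ : ℝ} (hθ : 0 < θ) :
    kappaC q θ = ((∑' k : ℕ, q ^ (k:ℝ) / (1 - q ^ (θ + (k:ℝ))) ^ 2 : ℝ) : ℂ) := by
  have hl := logq_ne hq0 hq1
  have hqθ : (0:ℝ) < q ^ θ := Real.rpow_pos_of_pos hq0 θ
  have hsum : (∑' k : ℕ, q ^ (θ + (k:ℝ)) / (1 - q ^ (θ + (k:ℝ))) ^ 2)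
      = q ^ θ * ∑' k : ℕ, q ^ (k:ℝ) / (1 - q ^ (θ + (k:ℝ))) ^ 2 := by
    rw [← tsum_mul_left]
    exact tsum_congr fun k => by rw [Real.rpow_add hq0]; ring
  rw [kappaC, deriv_qDigamma_real hq0 hq1 hθ, hsum,
    show ((q:ℂ) ^ ((θ:ℝ) : ℂ)) = ((q ^ θ : ℝ) : ℂ) from (Complex.ofReal_cpow hq0.le θ).symm]
  have hAB : ((Real.log q : ℂ)) ^ 2 * ((q ^ θ : ℝ) : ℂ) ≠ 0 := by
    apply mul_ne_zero
    · exact pow_ne_zero 2 (by exact_mod_cast logq_ne hq0 hq1)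
    · exact_mod_cast hqθ.ne'
  push_cast
  rw [← mul_assoc, mul_div_cancel_left₀ _ hAB]

lemma fC_im (hq0 : 0 < q) (hq1 : q < 1) {θ : ℝ} (hθ : 0 < θ) : (fC q θ).im = 0 := by
  rw [fC, deriv_qDigamma_real hq0 hq1 hθ, qDigamma_real hq0 hq1 hθ,
    show ((Real.log q : ℂ)) ^ 2 = (((Real.log q) ^ 2 : ℝ) : ℂ) by push_cast; ring,
    ← Complex.ofReal_div, ← Complex.ofReal_div, ← Complex.ofReal_div,
    ← Complex.ofReal_sub, ← Complex.ofReal_sub]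
  exact Complex.ofReal_im _


lemma re_log_qPoch (hq0 : 0 < q) (hq1 : q < 1) {z : ℂ} (hz : 0 < z.re) :
    (Complex.log (qPoch ((q : ℂ) ^ z) (q : ℂ))).re = ∑' k : ℕ, (T q k z).re := by
  rw [qPoch_eq_exp hq0 hq1 hz, Complex.log_re, Complex.norm_exp, Real.log_exp, S1,
    Complex.re_tsum (summable_T hq0 hq1 z)]

lemma div_one_sub_im (w : ℂ) (h : Complex.normSq (1 - w) ≠ 0) :
    (w / (1 - w)).im = w.im / Complex.normSq (1 - w) := by
  rw [Complex.div_im]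
  field_simp
  simp only [Complex.sub_re, Complex.sub_im, Complex.one_re, Complex.one_im]
  ring

lemma U_im (hq0 : 0 < q) (X Y : ℝ) (k : ℕ) :
    (U q k ((X : ℂ) + (Y : ℂ) * Complex.I)).im
      = q ^ (X + (k:ℝ)) * Real.sin (Y * Real.log q) := by
  rw [U, cpow_eq_exp hq0, Complex.exp_im]
  have hre : ((Real.log q : ℂ) * ((X : ℂ) + (Y : ℂ) * Complex.I + (k : ℂ))).re
      = Real.log q * (X + (k:ℝ)) := by simp; try ring
  have him : ((Real.log q : ℂ) * ((X : ℂ) + (Y : ℂ) * Complex.I + (k : ℂ))).im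
      = Real.log q * Y := by simp
  rw [hre, him, Real.rpow_def_of_pos hq0, mul_comm Y (Real.log q)]

lemma qpowZ_im (hq0 : 0 < q) (X Y : ℝ) :
    ((q : ℂ) ^ ((X : ℂ) + (Y : ℂ) * Complex.I)).im = q ^ X * Real.sin (Y * Real.log q) := by
  rw [cpow_eq_exp hq0, Complex.exp_im]
  have hre : ((Real.log q : ℂ) * ((X : ℂ) + (Y : ℂ) * Complex.I)).re = Real.log q * X := by simp
  have him : ((Real.log q : ℂ) * ((X : ℂ) + (Y : ℂ) * Complex.I)).im = Real.log q * Y := by simp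
  rw [hre, him, Real.rpow_def_of_pos hq0, mul_comm Y (Real.log q)]

end F0Aux

open F0Aux in
theorem f0_re_deriv_vertical (q θ : ℝ) (hq0 : 0 < q) (hq1 : q < 1) (hθ : 0 < θ)
    (X : ℝ) (hX : 0 < X) (Y : ℝ) :
    deriv (fun y : ℝ => (f0 q θ ((X : ℂ) + (y : ℂ) * Complex.I)).re) Y =
      -Real.sin (Y * Real.log q) * Real.log q *
        ∑' k : ℕ, q ^ (X + (k : ℝ)) *
          (1 / (1 - q ^ (θ + (k : ℝ))) ^ 2
            - 1 / ‖(1 - (q : ℂ) ^ ((X : ℂ) + (Y : ℂ) * Complex.I + (k : ℂ)))‖ ^ 2) := by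
  set l := Real.log q with hl
  have hl0 : l ≠ 0 := logq_ne hq0 hq1
  set Z : ℝ → ℂ := fun y => (X : ℂ) + (y : ℂ) * Complex.I with hZ
  have hZre : ∀ y, (Z y).re = X := by intro y; simp [hZ]
  have hZd : ∀ y : ℝ, HasDerivAt Z Complex.I y := by
    intro y
    rw [hZ]
    simpa using ((hasDerivAt_id y).ofReal_comp.mul_const Complex.I).const_add (X : ℂ)
  have hZXre : ∀ y, 0 < (Z y).re := fun y => by rw [hZre]; exact hX
  -- rewrite the function as a sum of three terms
  have hfun : (fun y : ℝ => (f0 q θ (Z y)).re)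
      = fun y => ((-fC q θ * (l : ℂ) * Z y).re + (kappaC q θ * (q : ℂ) ^ Z y).re)
        + ∑' k : ℕ, (T q k (Z y)).re := by
    funext y
    rw [f0, Complex.add_re, Complex.add_re, re_log_qPoch hq0 hq1 (hZXre y)]
  -- derivative of the affine part
  have hA : HasDerivAt (fun y : ℝ => (-fC q θ * (l : ℂ) * Z y).re)
      ((-fC q θ * (l : ℂ) * Complex.I).re) Y :=
    Complex.reCLM.hasFDerivAt.comp_hasDerivAt Y ((hZd Y).const_mul (-fC q θ * (l : ℂ)))
  have hAval : (-fC q θ * (l : ℂ) * Complex.I).re = 0 := by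
    have him : (-fC q θ * (l : ℂ)).im = 0 := by
      simp [Complex.mul_im, fC_im hq0 hq1 hθ]
    rw [Complex.mul_re, Complex.I_re, Complex.I_im, him]
    ring
  -- derivative of the kappa part
  have hB : HasDerivAt (fun y : ℝ => (kappaC q θ * (q : ℂ) ^ Z y).re)
      ((kappaC q θ * (Complex.I * ((l : ℂ) * (q : ℂ) ^ Z Y))).re) Y := by
    have h1 : HasDerivAt (fun y : ℝ => (q : ℂ) ^ Z y)
        (Complex.I • ((l : ℂ) * (q : ℂ) ^ Z Y)) Y :=
      HasDerivAt.scomp Y (hasDerivAt_qpow hq0 (Z Y)) (hZd Y)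
    have h2 := h1.const_mul (kappaC q θ)
    exact Complex.reCLM.hasFDerivAt.comp_hasDerivAt Y (by simpa [smul_eq_mul] using h2)
  -- derivative of the series part
  have hC : HasDerivAt (fun y : ℝ => ∑' k : ℕ, (T q k (Z y)).re)
      (∑' k : ℕ, (Complex.I * T' q k (Z Y)).re) Y := by
    have hu : Summable (fun k : ℕ => |l| * (q ^ X * q ^ (k:ℝ) / (1 - q ^ X))) := by
      have hs : Summable (fun k : ℕ => |l| * (q ^ X / (1 - q ^ X)) * q ^ (k:ℝ)) :=
        summable_geom_aux hq0 hq1 _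
      exact hs.congr fun k => by ring
    have hg : ∀ (k : ℕ) (y : ℝ), HasDerivAt (fun y : ℝ => (T q k (Z y)).re)
        ((Complex.I * T' q k (Z y)).re) y := by
      intro k y
      have h1 : HasDerivAt (fun y : ℝ => T q k (Z y)) (Complex.I * T' q k (Z y)) y := by
        simpa [smul_eq_mul, Function.comp_def] using
          HasDerivAt.scomp y (hasDerivAt_T hq0 hq1 (hZXre y) k) (hZd y)
      exact Complex.reCLM.hasFDerivAt.comp_hasDerivAt y h1
    have hg' : ∀ (k : ℕ) (y : ℝ), ‖(Complex.I * T' q k (Z y)).re‖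
        ≤ |l| * (q ^ X * q ^ (k:ℝ) / (1 - q ^ X)) := by
      intro k y
      calc ‖(Complex.I * T' q k (Z y)).re‖
          ≤ ‖Complex.I * T' q k (Z y)‖ := Complex.abs_re_le_norm _
        _ = ‖T' q k (Z y)‖ := by simp
        _ ≤ |l| * (q ^ X * q ^ (k:ℝ) / (1 - q ^ X)) :=
            norm_T'_le hq0 hq1 hX (le_of_eq (hZre y).symm) k
    have hg0 : Summable (fun k : ℕ => (T q k (Z Y)).re) :=
      (Complex.hasSum_re (summable_T hq0 hq1 (Z Y)).hasSum).summable
    exact hasDerivAt_tsum hu hg hg' hg0 Y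
  -- total derivative
  have hTot := (hA.add hB).add hC
  simp only [Pi.add_def] at hTot
  rw [hfun, hTot.deriv, hAval, zero_add]
  -- now compute the two values
  have hqX1 : q ^ X < 1 := q_rpow_lt_one hq0 hq1 hX
  have habs_ge : ∀ k : ℕ, 1 - q ^ X ≤ ‖1 - U q k (Z Y)‖ := fun k =>
    abs_one_sub_U_ge hq0 hq1 (le_of_eq (hZre Y).symm) k
  have hNS_pos : ∀ k : ℕ, 0 < Complex.normSq (1 - U q k (Z Y)) := by
    intro k
    rw [← Complex.sq_norm]
    have := habs_ge k
    nlinarith [hqX1]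
  -- value of kappa part
  have hBval : (kappaC q θ * (Complex.I * ((l : ℂ) * (q : ℂ) ^ Z Y))).re
      = -(∑' k : ℕ, q ^ (k:ℝ) / (1 - q ^ (θ + (k:ℝ))) ^ 2) * l * (q ^ X * Real.sin (Y * l)) := by
    rw [kappaC_eq hq0 hq1 hθ]
    set κR := ∑' k : ℕ, q ^ (k:ℝ) / (1 - q ^ (θ + (k:ℝ))) ^ 2
    have h1 : ((κR : ℂ) * (Complex.I * ((l : ℂ) * (q : ℂ) ^ Z Y))).re
        = -(κR * l * ((q : ℂ) ^ Z Y).im) := by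
      simp [Complex.mul_re, Complex.mul_im]
      ring
    rw [h1, hZ, qpowZ_im hq0 X Y]
    ring
  -- value of each series term
  have hCval : ∀ k : ℕ, (Complex.I * T' q k (Z Y)).re
      = l * Real.sin (Y * l) * (q ^ (X + (k:ℝ)) / Complex.normSq (1 - U q k (Z Y))) := by
    intro k
    have h1 : (Complex.I * T' q k (Z Y)).re = -(T' q k (Z Y)).im := by
      simp [Complex.mul_re]
    have h2 : (T' q k (Z Y)).im = -l * (U q k (Z Y) / (1 - U q k (Z Y))).im := by
      rw [T']
      simp [Complex.mul_im, hl]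
    rw [h1, h2, div_one_sub_im _ (hNS_pos k).ne', hZ, U_im hq0 X Y k]
    ring
  rw [tsum_congr hCval]
  -- summabilities for splitting the RHS sum
  have hsumB : Summable (fun k : ℕ => q ^ (X + (k:ℝ)) / Complex.normSq (1 - U q k (Z Y))) := by
    refine Summable.of_nonneg_of_le
      (fun k => (div_pos (Real.rpow_pos_of_pos hq0 _) (hNS_pos k)).le) (fun k => ?_)
      (summable_geom_aux hq0 hq1 (q ^ X / (1 - q ^ X) ^ 2))
    have h2 : (1 - q ^ X) ^ 2 ≤ Complex.normSq (1 - U q k (Z Y)) := by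
      rw [← Complex.sq_norm]
      exact pow_le_pow_left₀ (by linarith) (habs_ge k) 2
    calc q ^ (X + (k:ℝ)) / Complex.normSq (1 - U q k (Z Y))
        ≤ q ^ (X + (k:ℝ)) / (1 - q ^ X) ^ 2 :=
          div_le_div_of_nonneg_left (Real.rpow_pos_of_pos hq0 _).le
            (pow_pos (by linarith) 2) h2
      _ = q ^ X / (1 - q ^ X) ^ 2 * q ^ (k:ℝ) := by rw [Real.rpow_add hq0]; ring
  have hsumA : Summable (fun k : ℕ => q ^ (X + (k:ℝ)) / (1 - q ^ (θ + (k:ℝ))) ^ 2) := by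
    have hqθ : q ^ θ < 1 := q_rpow_lt_one hq0 hq1 hθ
    refine Summable.of_nonneg_of_le (fun k => ?_) (fun k => ?_)
      (summable_geom_aux hq0 hq1 (q ^ X / (1 - q ^ θ) ^ 2))
    · have : q ^ (θ + (k:ℝ)) < 1 := q_rpow_lt_one hq0 hq1 (by positivity)
      positivity
    · have hle : q ^ (θ + (k:ℝ)) ≤ q ^ θ := by
        rw [Real.rpow_add hq0]
        nth_rewrite 2 [show q ^ θ = q ^ θ * 1 by ring]
        exact mul_le_mul_of_nonneg_left
          (Real.rpow_le_one hq0.le hq1.le (Nat.cast_nonneg k)) (Real.rpow_nonneg hq0.le _)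
      have h2 : (1 - q ^ θ) ^ 2 ≤ (1 - q ^ (θ + (k:ℝ))) ^ 2 :=
        pow_le_pow_left₀ (by linarith) (by linarith) 2
      calc q ^ (X + (k:ℝ)) / (1 - q ^ (θ + (k:ℝ))) ^ 2
          ≤ q ^ (X + (k:ℝ)) / (1 - q ^ θ) ^ 2 :=
            div_le_div_of_nonneg_left (Real.rpow_pos_of_pos hq0 _).le
              (pow_pos (by linarith) 2) h2
        _ = q ^ X / (1 - q ^ θ) ^ 2 * q ^ (k:ℝ) := by rw [Real.rpow_add hq0]; ring
  -- rewrite RHS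
  have hRHS : ∑' k : ℕ, q ^ (X + (k : ℝ)) *
      (1 / (1 - q ^ (θ + (k : ℝ))) ^ 2
        - 1 / ‖1 - (q : ℂ) ^ ((X : ℂ) + (Y : ℂ) * Complex.I + (k : ℂ))‖ ^ 2)
      = (∑' k : ℕ, q ^ (X + (k:ℝ)) / (1 - q ^ (θ + (k:ℝ))) ^ 2)
        - ∑' k : ℕ, q ^ (X + (k:ℝ)) / Complex.normSq (1 - U q k (Z Y)) := by
    rw [← Summable.tsum_sub hsumA hsumB]
    refine tsum_congr fun k => ?_
    have : ‖1 - (q : ℂ) ^ ((X : ℂ) + (Y : ℂ) * Complex.I + (k : ℂ))‖ ^ 2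
        = Complex.normSq (1 - U q k (Z Y)) := by
      rw [Complex.sq_norm]; rfl
    rw [this]
    ring
  rw [hRHS]
  -- kappa sum transformation
  have hKsum : (∑' k : ℕ, q ^ (k:ℝ) / (1 - q ^ (θ + (k:ℝ))) ^ 2) * q ^ X
      = ∑' k : ℕ, q ^ (X + (k:ℝ)) / (1 - q ^ (θ + (k:ℝ))) ^ 2 := by
    rw [← tsum_mul_right]
    exact tsum_congr fun k => by rw [Real.rpow_add hq0 X (k:ℝ)]; ring
  -- final series transformation
  have hCsum : ∑' k : ℕ, l * Real.sin (Y * l) *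
      (q ^ (X + (k:ℝ)) / Complex.normSq (1 - U q k (Z Y)))
      = l * Real.sin (Y * l) *
        ∑' k : ℕ, q ^ (X + (k:ℝ)) / Complex.normSq (1 - U q k (Z Y)) := by
    rw [tsum_mul_left]
  rw [hBval, hCsum, ← hKsum]
  ring
end

section
/- Fix 0 < q < 1 and θ > 0, and parametrize the contour C_{θ,π/4} by W(s) = log_q(q^θ + |s| e^{i(π/4) sgn(s)}). Then for all s > 0, d/ds Re[f_0(W(s))] = Σ_{k=0}^∞ q^{2k} s^2 (√2/2)(q^k s^2 + q^θ(1-q^{θ+k})) / ((1-q^{θ+k})^2 |1-q^{θ+k}-e^{iπ/4} s q^k|^2 |q^θ + e^{iπ/4} s|^2) > 0; in particular s ↦ Re[f_0(W(s))] is strictly increasing on (0,∞). -/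
open Complex Real

/-- The contour `C_{θ,π/4}`, parametrized by `W(s) = log_q (q^θ + |s| e^{i(π/4) sgn s})`. -/
noncomputable def Wc (q θ : ℝ) (s : ℝ) : ℂ :=
  Complex.log ((q : ℂ) ^ (θ : ℂ) +
    (|s| : ℝ) * Complex.exp (Complex.I * ((Real.pi / 4) * Real.sign s))) / (Real.log q : ℂ)

noncomputable section SDaux
namespace SD

def rr : ℝ := Real.sqrt 2

def ee : ℂ := Complex.exp (Complex.I * (Real.pi/4))

lemma hrr : rr ^ 2 = 2 := Real.sq_sqrt (by norm_num)

lemma hrr0 : 0 < rr := Real.sqrt_pos.mpr (by norm_num)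

lemma ee_re : ee.re = rr / 2 := by
  rw [ee, mul_comm, Complex.exp_mul_I]
  have : (Real.pi/4 : ℂ) = ((Real.pi/4 : ℝ) : ℂ) := by push_cast; ring
  rw [this, ← Complex.ofReal_cos, ← Complex.ofReal_sin]
  simp [Real.cos_pi_div_four, rr]

lemma ee_im : ee.im = rr / 2 := by
  rw [ee, mul_comm, Complex.exp_mul_I]
  have : (Real.pi/4 : ℂ) = ((Real.pi/4 : ℝ) : ℂ) := by push_cast; ring
  rw [this, ← Complex.ofReal_cos, ← Complex.ofReal_sin]
  simp [Real.sin_pi_div_four, rr]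

/-- key polynomial identity -/
lemma key_poly (r a b s c α β : ℝ) (hr : r^2 = 2) (hc : c = 1 - a*b)
    (hα : α = a^2 + r*a*s + s^2) (hβ : β = c^2 - r*c*b*s + b^2*s^2) :
    -(a*b)^2*(r*a+2*s)*β + b*r*α*β - b*(r*c-2*b*s)*c^2*α = r*b^2*s^2*(b*s^2+a*c) := by
  subst hc hα hβ
  linear_combination (-b^2*s^3 + 2*a*b^3*s^3 - r*a*b^2*s^2 + r*a^2*b^3*s^2) * hr

/-- key fraction identity -/
lemma key_frac (r a b s c α β : ℝ) (hr : r^2 = 2) (hc : c = 1 - a*b)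
    (hα : α = a^2 + r*a*s + s^2) (hβ : β = c^2 - r*c*b*s + b^2*s^2)
    (hc0 : c ≠ 0) (hα0 : α ≠ 0) (hβ0 : β ≠ 0) :
    -((a*b)^2/c^2)*((r*a+2*s)/(2*α)) + (b/c^2)*(r/2) + (2*b^2*s - r*c*b)/(2*β)
      = b^2*s^2*(r/2)*(b*s^2+a*c)/(c^2*β*α) := by
  have key := key_poly r a b s c α β hr hc hα hβ
  have hd : (2*c^2*α*β) ≠ 0 := by positivity
  have hL : -((a*b)^2/c^2)*((r*a+2*s)/(2*α)) + (b/c^2)*(r/2) + (2*b^2*s - r*c*b)/(2*β)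
      = (-(a*b)^2*(r*a+2*s)*β + b*r*α*β - b*(r*c-2*b*s)*c^2*α) / (2*c^2*α*β) := by
    field_simp
    ring
  have hR : b^2*s^2*(r/2)*(b*s^2+a*c)/(c^2*β*α)
      = (r*b^2*s^2*(b*s^2+a*c)) / (2*c^2*α*β) := by
    rw [div_eq_div_iff (by positivity) hd]
    ring
  rw [hL, hR, key]
set_option linter.unusedSectionVars false

variable (q θ : ℝ)

def cc (k : ℕ) : ℝ := 1 - q ^ θ * q ^ k

def Af (s : ℝ) : ℂ := ((q ^ θ : ℝ) : ℂ) + s * ee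

def Bf (k : ℕ) (s : ℝ) : ℂ := 1 - Af q θ s * (q : ℂ) ^ k

def al (s : ℝ) : ℝ := (q^θ)^2 + rr * q^θ * s + s^2

def be (k : ℕ) (s : ℝ) : ℝ := (cc q θ k)^2 - rr * cc q θ k * q^k * s + (q^k)^2 * s^2

variable {q θ} (hq0 : 0 < q) (hq1 : q < 1) (hθ : 0 < θ)

section basic
include hq0 hq1 hθ

lemma ha0 : 0 < q ^ θ := Real.rpow_pos_of_pos hq0 θ

lemma ha1 : q ^ θ < 1 := Real.rpow_lt_one hq0.le hq1 hθ

lemma hcc_ge (k : ℕ) : 1 - q ^ θ ≤ cc q θ k := by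
  have h1 : q ^ θ * q ^ k ≤ q ^ θ * 1 := by
    apply mul_le_mul_of_nonneg_left _ (ha0 hq0 hq1 hθ).le
    exact pow_le_one₀ hq0.le hq1.le
  simp only [cc]; nlinarith

lemma hcc0 (k : ℕ) : 0 < cc q θ k :=
  lt_of_lt_of_le (by nlinarith [ha1 hq0 hq1 hθ]) (hcc_ge hq0 hq1 hθ k)

lemma hcc_le (k : ℕ) : cc q θ k ≤ 1 := by
  have := pow_pos hq0 k
  have := ha0 hq0 hq1 hθ
  simp only [cc]; nlinarith

end basic

lemma Af_re (s : ℝ) : (Af q θ s).re = q ^ θ + s * (rr/2) := by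
  simp [Af, Complex.add_re, Complex.mul_re, ee_re, ee_im]

lemma Af_im (s : ℝ) : (Af q θ s).im = s * (rr/2) := by
  simp [Af, Complex.add_im, Complex.mul_im, ee_re, ee_im]

lemma normSq_Af (s : ℝ) : Complex.normSq (Af q θ s) = al q θ s := by
  rw [Complex.normSq_apply, Af_re, Af_im, al]
  linear_combination (s^2/2) * hrr

lemma normSq_Bf (k : ℕ) (s : ℝ) : Complex.normSq (Bf q θ k s) = be q θ k s := by
  have hre : (Bf q θ k s).re = 1 - q^θ * q^k - s * (rr/2) * q^k := by
    simp [Bf, Complex.sub_re, Complex.mul_re, Af_re, Af_im, ← Complex.ofReal_pow]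
    ring
  have him : (Bf q θ k s).im = -(s * (rr/2) * q^k) := by
    simp [Bf, Complex.sub_im, Complex.mul_im, Af_re, Af_im, ← Complex.ofReal_pow]
  rw [Complex.normSq_apply, hre, him, be, cc]
  linear_combination ((s*q^k)^2/2) * hrr

include hq0 hq1 in
lemma hal_pos (s : ℝ) : 0 < al q θ s := by
  have ha := Real.rpow_pos_of_pos hq0 θ
  have hs2 : rr^2*s^2 = 2*s^2 := by rw [hrr]
  rw [al]
  nlinarith [sq_nonneg (q^θ + rr*s), mul_pos ha ha, hs2]

include hq0 hq1 hθ in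
lemma hbe_pos (k : ℕ) (s : ℝ) : 0 < be q θ k s := by
  have hc := hcc0 hq0 hq1 hθ k
  have hs2 : rr^2*(q^k*s)^2 = 2*(q^k*s)^2 := by rw [hrr]
  rw [be]
  nlinarith [sq_nonneg (cc q θ k - rr*(q^k*s)), mul_pos hc hc, hs2]

include hq0 hq1 hθ in
lemma Af_ne (s : ℝ) : Af q θ s ≠ 0 := by
  intro h
  have := normSq_Af (q := q) (θ := θ) s
  rw [h, Complex.normSq_zero] at this
  exact absurd this.symm (ne_of_gt (hal_pos hq0 hq1 s))

include hq0 hq1 hθ in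
lemma Bf_ne (k : ℕ) (s : ℝ) : Bf q θ k s ≠ 0 := by
  intro h
  have := normSq_Bf (q := q) (θ := θ) k s
  rw [h, Complex.normSq_zero] at this
  exact absurd this.symm (ne_of_gt (hbe_pos hq0 hq1 hθ k s))

/-- geometric-bound summability helper -/
lemma summable_geom_bound {E : Type*} [NormedAddCommGroup E] [CompleteSpace E]
    (u : ℕ → E) (C ρ : ℝ) (h0 : 0 ≤ ρ) (h1 : ρ < 1)
    (h : ∀ k, ‖u k‖ ≤ C * ρ^k) : Summable u :=
  Summable.of_norm_bounded ((summable_geometric_of_lt_one h0 h1).mul_left C) h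

/-- complex log summability helper -/
lemma summable_clog (v : ℕ → ℂ) (C ρ : ℝ) (h0 : 0 ≤ ρ) (h1 : ρ < 1)
    (hb : ∀ k, ‖v k‖ ≤ C * ρ^k) : Summable (fun k => Complex.log (1 + v k)) := by
  have htend : Filter.Tendsto (fun k : ℕ => C * ρ^k) Filter.atTop (nhds 0) := by
    simpa using (tendsto_pow_atTop_nhds_zero_of_lt_one h0 h1).const_mul C
  have hev : ∀ᶠ k in Filter.atTop, ‖Complex.log (1 + v k)‖ ≤ (3/2*C) * ρ^k := by
    filter_upwards [htend.eventually_le_const (show (0:ℝ) < 1/2 by norm_num)] with k hk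
    calc ‖Complex.log (1 + v k)‖ ≤ 3/2 * ‖v k‖ :=
          Complex.norm_log_one_add_half_le_self (le_trans (hb k) hk)
      _ ≤ 3/2 * (C * ρ^k) := by nlinarith [hb k]
      _ = (3/2*C) * ρ^k := by ring
  exact Summable.of_norm_bounded_eventually_nat
    ((summable_geometric_of_lt_one h0 h1).mul_left (3/2*C)) hev

/-- one-point product-to-exp -/
lemma tprod_eq_exp (g : ℕ → ℂ) (h0 : ∀ k, g k ≠ 0)
    (hs : Summable fun k => Complex.log (g k)) :
    ∏' k, g k = Complex.exp (∑' k, Complex.log (g k)) := by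
  exact (Complex.cexp_tsum_eq_tprod h0 hs).symm

variable (q θ)

def gf (k : ℕ) (s : ℝ) : ℝ := Real.log ‖Bf q θ k s‖

def gd (k : ℕ) (s : ℝ) : ℝ := (2*(q^k)^2*s - rr * cc q θ k * q^k) / (2 * be q θ k s)

def xs (k : ℕ) : ℝ := (q^θ*q^k)^2/(cc q θ k)^2

def ys (k : ℕ) : ℝ := q^k/(cc q θ k)^2

def frS : ℝ := ∑' k, xs q θ k

def krS : ℝ := ∑' k, ys q θ k

def GG (s : ℝ) : ℝ := -frS q θ * (Real.log (al q θ s)/2) + krS q θ * (q^θ + (rr/2)*s)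
  + ∑' k, gf q θ k s

def GD (s : ℝ) : ℝ := -frS q θ * ((rr*q^θ + 2*s)/(2 * al q θ s)) + krS q θ * (rr/2)
  + ∑' k, gd q θ k s

variable {q θ}

include hq0 hq1 hθ in
lemma gf_eq (k : ℕ) (s : ℝ) : gf q θ k s = Real.log (be q θ k s) / 2 := by
  rw [gf, Complex.norm_def, normSq_Bf, Real.log_sqrt (hbe_pos hq0 hq1 hθ k s).le]

lemma hasDerivAt_be (k : ℕ) (s : ℝ) :
    HasDerivAt (be q θ k) (2*(q^k)^2*s - rr * cc q θ k * q^k) s := by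
  have h : HasDerivAt (fun s : ℝ => (cc q θ k)^2 - rr * cc q θ k * q^k * s + (q^k)^2 * s^2)
      (0 - rr * cc q θ k * q^k * 1 + (q^k)^2 * (2*s^1)) s :=
    (((hasDerivAt_const s ((cc q θ k)^2)).sub
      ((hasDerivAt_id s).const_mul (rr * cc q θ k * q^k))).add
      ((hasDerivAt_pow 2 s).const_mul ((q^k)^2)))
  have h2 : HasDerivAt (be q θ k) (0 - rr * cc q θ k * q^k * 1 + (q^k)^2 * (2*s^1)) s := h
  convert h2 using 1
  ring

include hq0 hq1 hθ in
lemma hasDerivAt_gf (k : ℕ) (s : ℝ) : HasDerivAt (gf q θ k) (gd q θ k s) s := by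
  have hbe := hbe_pos hq0 hq1 hθ k s
  have h1 : HasDerivAt (fun s => Real.log (be q θ k s))
      ((be q θ k s)⁻¹ * (2*(q^k)^2*s - rr * cc q θ k * q^k)) s :=
    (Real.hasDerivAt_log (ne_of_gt hbe)).comp s (hasDerivAt_be k s)
  have h2 := h1.div_const 2
  have h3 : (fun s => Real.log (be q θ k s) / 2) = gf q θ k := by
    funext t; rw [gf_eq hq0 hq1 hθ]
  rw [h3] at h2
  refine h2.congr_deriv ?_
  rw [gd]; ring

include hq0 hq1 hθ in
lemma gd_bound (k : ℕ) (s : ℝ) : ‖gd q θ k s‖ ≤ (1/(rr*(1 - q^θ))) * q^k := by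
  have hbe := hbe_pos hq0 hq1 hθ k s
  have hc := hcc0 hq0 hq1 hθ k
  have hcge := hcc_ge hq0 hq1 hθ k
  have ha1' := ha1 hq0 hq1 hθ
  have hqk : (0:ℝ) < q^k := pow_pos hq0 k
  have hum : 0 < 1 - q ^ θ := by linarith
  have hpos : 0 < rr*(1-q^θ) := mul_pos hrr0 hum
  have hne : rr*(1-q^θ) ≠ 0 := ne_of_gt hpos
  have hbe2 : 2 * be q θ k s
      = (2*q^k*s - rr*cc q θ k)^2/2 + (cc q θ k)^2 := by
    rw [be]; linear_combination (-((cc q θ k)^2)/2) * hrr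
  have h5 : |2*q^k*s - rr*cc q θ k|^2*rr^2 = (2*q^k*s - rr*cc q θ k)^2*2 := by
    rw [_root_.sq_abs, hrr]
  have hkey : rr * cc q θ k * |2*q^k*s - rr*cc q θ k|
      ≤ (2*q^k*s - rr*cc q θ k)^2/2 + (cc q θ k)^2 := by
    nlinarith [sq_nonneg (|2*q^k*s - rr*cc q θ k| * rr/2 - cc q θ k), h5,
      abs_nonneg (2*q^k*s - rr*cc q θ k)]
  have h1 : rr * (1-q^θ) * |2*q^k*s - rr*cc q θ k| ≤ rr * cc q θ k * |2*q^k*s - rr*cc q θ k| :=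
    mul_le_mul_of_nonneg_right (by nlinarith [hrr0]) (abs_nonneg _)
  have h4 : rr*(1-q^θ)*|2*q^k*s - rr*cc q θ k|
      ≤ (2*q^k*s - rr*cc q θ k)^2/2 + (cc q θ k)^2 := le_trans h1 hkey
  have hnum : |2*(q^k)^2*s - rr*cc q θ k*q^k| = q^k * |2*q^k*s - rr*cc q θ k| := by
    rw [show 2*(q^k)^2*s - rr*cc q θ k*q^k = q^k * (2*q^k*s - rr*cc q θ k) by ring,
      abs_mul, abs_of_pos hqk]
  rw [Real.norm_eq_abs, gd, abs_div, abs_of_pos (by positivity : (0:ℝ) < 2 * be q θ k s),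
    div_le_iff₀ (by positivity), hnum, hbe2]
  have h6 : rr*(1-q^θ) * (q^k * |2*q^k*s - rr*cc q θ k|)
      ≤ q^k * ((2*q^k*s - rr*cc q θ k)^2/2 + (cc q θ k)^2) := by
    nlinarith [mul_le_mul_of_nonneg_left h4 hqk.le]
  calc q^k*|2*q^k*s - rr*cc q θ k|
      = rr*(1-q^θ)*(q^k*|2*q^k*s - rr*cc q θ k|) / (rr*(1-q^θ)) :=
        (mul_div_cancel_left₀ _ hne).symm
    _ ≤ (q^k * ((2*q^k*s - rr*cc q θ k)^2/2 + (cc q θ k)^2))/(rr*(1-q^θ)) := by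
        gcongr
    _ = 1/(rr*(1-q^θ)) * q^k * ((2*q^k*s - rr*cc q θ k)^2/2 + (cc q θ k)^2) := by ring

section sums
include hq0 hq1 hθ

lemma hum' : 0 < 1 - q^θ := by linarith [ha1 hq0 hq1 hθ]

lemma summable_xs : Summable (xs q θ) := by
  apply summable_geom_bound _ ((q^θ/(1-q^θ))^2) (q^2) (by positivity)
    (by nlinarith : q^2 < 1)
  intro k
  have hc := hcc0 hq0 hq1 hθ k
  have hcge := hcc_ge hq0 hq1 hθ k
  have hum := hum' hq0 hq1 hθ
  have ha := ha0 hq0 hq1 hθ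
  have hqk : (0:ℝ) < q^k := pow_pos hq0 k
  have hpow : (q^2)^k = (q^k)^2 := by rw [← pow_mul, mul_comm, pow_mul]
  calc ‖xs q θ k‖ = ((q^θ*q^k)/(cc q θ k))^2 := by
        rw [Real.norm_eq_abs, xs, abs_of_pos (by positivity), div_pow]
    _ ≤ ((q^θ*q^k)/(1-q^θ))^2 := by
        apply pow_le_pow_left₀ (by positivity)
        exact div_le_div_of_nonneg_left (by positivity) hum hcge
    _ = (q^θ/(1-q^θ))^2 * (q^2)^k := by rw [hpow]; ring

lemma summable_ys : Summable (ys q θ) := by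
  apply summable_geom_bound _ (1/(1-q^θ)^2) q hq0.le hq1
  intro k
  have hc := hcc0 hq0 hq1 hθ k
  have hcge := hcc_ge hq0 hq1 hθ k
  have hum := hum' hq0 hq1 hθ
  have hqk : (0:ℝ) < q^k := pow_pos hq0 k
  calc ‖ys q θ k‖ = q^k/(cc q θ k)^2 := by
        rw [Real.norm_eq_abs, ys, abs_of_pos (by positivity)]
    _ ≤ q^k/(1-q^θ)^2 := by
        apply div_le_div_of_nonneg_left hqk.le (by positivity)
        nlinarith
    _ = 1/(1-q^θ)^2 * q^k := by ring

lemma summable_gd (s : ℝ) : Summable (fun k => gd q θ k s) :=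
  summable_geom_bound _ (1/(rr*(1-q^θ))) q hq0.le hq1 (fun k => gd_bound hq0 hq1 hθ k s)

lemma summable_clog_Bf (s : ℝ) : Summable (fun k => Complex.log (Bf q θ k s)) := by
  have h := summable_clog (fun k => -(Af q θ s * (q:ℂ)^k)) ‖Af q θ s‖ q hq0.le hq1 ?_
  · apply h.congr; intro k; rw [Bf, sub_eq_add_neg]
  · intro k
    rw [norm_neg, norm_mul, norm_pow, Complex.norm_real, Real.norm_eq_abs, abs_of_pos hq0]

lemma summable_gf (s : ℝ) : Summable (fun k => gf q θ k s) := by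
  have h3 := (Complex.hasSum_re (summable_clog_Bf hq0 hq1 hθ s).hasSum).summable
  apply h3.congr
  intro k
  rw [gf, Complex.log_re]

lemma hasDerivAt_GG (s : ℝ) : HasDerivAt (GG q θ) (GD q θ s) s := by
  have ha := ha0 hq0 hq1 hθ
  have hal := hal_pos hq0 hq1 (θ := θ) s
  -- term 1
  have hal' : HasDerivAt (al q θ) (0 + rr * q^θ * 1 + 2*s^1) s := by
    exact ((hasDerivAt_const s ((q^θ)^2)).add
      ((hasDerivAt_id s).const_mul (rr * q^θ))).add (hasDerivAt_pow 2 s)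
  have h1 : HasDerivAt (fun s => -frS q θ * (Real.log (al q θ s)/2))
      (-frS q θ * ((al q θ s)⁻¹ * (0 + rr * q^θ * 1 + 2*s^1) / 2)) s :=
    (((Real.hasDerivAt_log (ne_of_gt hal)).comp s hal').div_const 2).const_mul (-frS q θ)
  -- term 2
  have h2 : HasDerivAt (fun s => krS q θ * (q^θ + (rr/2)*s)) (krS q θ * (0 + (rr/2)*1)) s :=
    ((hasDerivAt_const s (q^θ)).add ((hasDerivAt_id s).const_mul (rr/2))).const_mul (krS q θ)
  -- term 3
  have h3 : HasDerivAt (fun s => ∑' k, gf q θ k s) (∑' k, gd q θ k s) s := by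
    apply hasDerivAt_tsum (u := fun k => (1/(rr*(1 - q^θ))) * q^k) (y₀ := 0)
    · exact (summable_geometric_of_lt_one hq0.le hq1).mul_left _
    · intro k y; exact hasDerivAt_gf hq0 hq1 hθ k y
    · intro k y; exact gd_bound hq0 hq1 hθ k y
    · exact summable_gf hq0 hq1 hθ 0
  have h := (h1.add h2).add h3
  have hGG : (fun s => -frS q θ * (Real.log (al q θ s)/2) + krS q θ * (q^θ + (rr/2)*s)
      + ∑' k, gf q θ k s) = GG q θ := rfl
  change HasDerivAt (GG q θ) _ s at h
  convert h using 1
  rw [GD]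
  field_simp
  ring

end sums

variable (q θ)

def wf (k : ℕ) (z : ℂ) : ℂ := (q:ℂ)^z * (q:ℂ)^k

def P0 (z : ℂ) : ℂ := ∑' k, Complex.log (1 - wf q k z)

def P1 (z : ℂ) : ℂ := ∑' k, -((Real.log q : ℝ):ℂ) * wf q k z / (1 - wf q k z)

def P2 (z : ℂ) : ℂ := ∑' k, -((Real.log q : ℝ):ℂ)^2 * wf q k z / (1 - wf q k z)^2

def UU : Set ℂ := {z | θ/2 < z.re}

def Lf (z : ℂ) : ℂ := Complex.log (1 - (q:ℂ)) * (1 - z) + Complex.log (qPoch q q) - P0 q z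

def DD (z : ℂ) : ℂ := -Complex.log (1 - (q:ℂ)) - P1 q z

variable {q θ}

lemma hU_open : IsOpen (UU θ) := isOpen_lt continuous_const Complex.continuous_re

lemma hU_conv : Convex ℝ (UU θ) := convex_halfSpace_re_gt _

include hθ in
lemma hθU : (θ:ℂ) ∈ UU θ := by simp [UU]; linarith

section cx
include hq0 hq1 hθ

lemma hρ0 : 0 < q^(θ/2) := Real.rpow_pos_of_pos hq0 _

lemma hρ1 : q^(θ/2) < 1 := Real.rpow_lt_one hq0.le hq1 (by linarith)

lemma wf_norm {z : ℂ} (hz : z ∈ UU θ) (k : ℕ) : ‖wf q k z‖ ≤ q^(θ/2) * q^k := by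
  rw [wf, norm_mul, norm_pow,
    Complex.norm_cpow_eq_rpow_re_of_pos hq0, Complex.norm_real, Real.norm_eq_abs, abs_of_pos hq0]
  have h1 : q ^ z.re ≤ q^(θ/2) :=
    Real.rpow_le_rpow_of_exponent_ge hq0 hq1.le (le_of_lt hz)
  have h2 : (0:ℝ) ≤ q^k := (pow_pos hq0 k).le
  nlinarith

lemma wf_norm_lt {z : ℂ} (hz : z ∈ UU θ) (k : ℕ) : ‖wf q k z‖ < 1 := by
  have h1 := wf_norm hq0 hq1 hθ hz k
  have h2 : q^(θ/2) * q^k ≤ q^(θ/2) * 1 := by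
    have := hρ0 hq0 hq1 hθ (θ := θ)
    nlinarith [pow_le_one₀ hq0.le hq1.le (n := k)]
  nlinarith [hρ1 hq0 hq1 hθ]

lemma one_sub_wf_re {z : ℂ} (hz : z ∈ UU θ) (k : ℕ) : 0 < (1 - wf q k z).re := by
  have h1 := wf_norm_lt hq0 hq1 hθ hz k
  have h2 : (wf q k z).re ≤ ‖wf q k z‖ := Complex.re_le_norm _
  simp only [Complex.sub_re, Complex.one_re]
  linarith

lemma one_sub_wf_slit {z : ℂ} (hz : z ∈ UU θ) (k : ℕ) : (1 - wf q k z) ∈ Complex.slitPlane :=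
  Complex.mem_slitPlane_iff.mpr (Or.inl (one_sub_wf_re hq0 hq1 hθ hz k))

lemma one_sub_wf_ne {z : ℂ} (hz : z ∈ UU θ) (k : ℕ) : (1 - wf q k z) ≠ 0 := by
  intro h
  have := one_sub_wf_re hq0 hq1 hθ hz k
  rw [h] at this
  simp at this

lemma one_sub_wf_norm {z : ℂ} (hz : z ∈ UU θ) (k : ℕ) :
    1 - q^(θ/2) ≤ ‖1 - wf q k z‖ := by
  have h1 := wf_norm hq0 hq1 hθ hz k
  have h2 : ‖(1:ℂ)‖ - ‖wf q k z‖ ≤ ‖1 - wf q k z‖ := norm_sub_norm_le _ _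
  have h3 : q^(θ/2) * q^k ≤ q^(θ/2) * 1 := by
    have := hρ0 hq0 hq1 hθ (θ := θ)
    nlinarith [pow_le_one₀ hq0.le hq1.le (n := k)]
  simp only [norm_one] at h2
  linarith

lemma hasDerivAt_wf (k : ℕ) (z : ℂ) :
    HasDerivAt (wf q k) (((Real.log q : ℝ):ℂ) * wf q k z) z := by
  have h := (hasDerivAt_id z).const_cpow (c := (q:ℂ))
    (Or.inl (Complex.ofReal_ne_zero.mpr hq0.ne'))
  have h2 := h.mul_const ((q:ℂ)^k)
  have h3 : HasDerivAt (wf q k) ((q:ℂ)^z * Complex.log q * 1 * (q:ℂ)^k) z := h2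
  convert h3 using 1
  rw [wf, Complex.ofReal_log hq0.le]
  ring

lemma hasDerivAt_logterm (k : ℕ) {z : ℂ} (hz : z ∈ UU θ) :
    HasDerivAt (fun z => Complex.log (1 - wf q k z))
      (-((Real.log q : ℝ):ℂ) * wf q k z / (1 - wf q k z)) z := by
  have h := (Complex.hasDerivAt_log (one_sub_wf_slit hq0 hq1 hθ hz k)).comp z
    ((hasDerivAt_const z (1:ℂ)).sub (hasDerivAt_wf hq0 hq1 hθ k z))
  refine h.congr_deriv ?_
  ring

lemma hasDerivAt_P1term (k : ℕ) {z : ℂ} (hz : z ∈ UU θ) :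
    HasDerivAt (fun z => -((Real.log q : ℝ):ℂ) * wf q k z / (1 - wf q k z))
      (-((Real.log q : ℝ):ℂ)^2 * wf q k z / (1 - wf q k z)^2) z := by
  have hne := one_sub_wf_ne hq0 hq1 hθ hz k
  have h := HasDerivAt.div ((hasDerivAt_wf hq0 hq1 hθ k z).const_mul (-((Real.log q : ℝ):ℂ)))
    ((hasDerivAt_const z (1:ℂ)).sub (hasDerivAt_wf hq0 hq1 hθ k z)) hne
  refine h.congr_deriv ?_
  simp only [Pi.sub_apply]
  congr 1
  ring

lemma bound_logterm (k : ℕ) {z : ℂ} (hz : z ∈ UU θ) :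
    ‖-((Real.log q : ℝ):ℂ) * wf q k z / (1 - wf q k z)‖
      ≤ (|Real.log q| * q^(θ/2) / (1 - q^(θ/2))) * q^k := by
  have h1 := wf_norm hq0 hq1 hθ hz k
  have h2 := one_sub_wf_norm hq0 hq1 hθ hz k
  have hρ1 := hρ1 hq0 hq1 hθ (θ := θ)
  have hρ0 := hρ0 hq0 hq1 hθ (θ := θ)
  have hd : 0 < 1 - q^(θ/2) := by linarith
  rw [norm_div, norm_mul, norm_neg, Complex.norm_real ((Real.log q : ℝ)),
    Real.norm_eq_abs]
  calc |Real.log q| * ‖wf q k z‖ / ‖1 - wf q k z‖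
      ≤ |Real.log q| * (q^(θ/2) * q^k) / (1 - q^(θ/2)) := by
        apply div_le_div₀ (by positivity) _ hd h2
        nlinarith [abs_nonneg (Real.log q), norm_nonneg (wf q k z)]
    _ = (|Real.log q| * q^(θ/2) / (1 - q^(θ/2))) * q^k := by ring

lemma bound_P1term (k : ℕ) {z : ℂ} (hz : z ∈ UU θ) :
    ‖-((Real.log q : ℝ):ℂ)^2 * wf q k z / (1 - wf q k z)^2‖
      ≤ ((Real.log q)^2 * q^(θ/2) / (1 - q^(θ/2))^2) * q^k := by
  have h1 := wf_norm hq0 hq1 hθ hz k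
  have h2 := one_sub_wf_norm hq0 hq1 hθ hz k
  have hρ1 := hρ1 hq0 hq1 hθ (θ := θ)
  have hρ0 := hρ0 hq0 hq1 hθ (θ := θ)
  have hd : 0 < 1 - q^(θ/2) := by linarith
  have hwn : 0 ≤ ‖wf q k z‖ := norm_nonneg _
  rw [norm_div, norm_mul, norm_neg, norm_pow, norm_pow,
    Complex.norm_real ((Real.log q : ℝ)), Real.norm_eq_abs]
  calc |Real.log q|^2 * ‖wf q k z‖ / ‖1 - wf q k z‖^2
      ≤ |Real.log q|^2 * (q^(θ/2) * q^k) / (1 - q^(θ/2))^2 := by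
        apply div_le_div₀ (by positivity) _ (by positivity) _
        · nlinarith [sq_nonneg (|Real.log q|)]
        · nlinarith
    _ = ((Real.log q)^2 * q^(θ/2) / (1 - q^(θ/2))^2) * q^k := by
        rw [_root_.sq_abs]; ring

lemma summable_logterm {z : ℂ} (hz : z ∈ UU θ) :
    Summable (fun k => Complex.log (1 - wf q k z)) := by
  have h := summable_clog (fun k => -(wf q k z)) (q^(θ/2)) q hq0.le hq1 ?_
  · apply h.congr; intro k; rw [sub_eq_add_neg]
  · intro k
    rw [norm_neg, show (q:ℝ)^(θ/2) * q^k = q^(θ/2) * q^k from rfl]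
    exact wf_norm hq0 hq1 hθ hz k

lemma summable_P1term {z : ℂ} (hz : z ∈ UU θ) :
    Summable (fun k => -((Real.log q : ℝ):ℂ) * wf q k z / (1 - wf q k z)) := by
  apply summable_geom_bound _ (|Real.log q| * q^(θ/2) / (1 - q^(θ/2))) q hq0.le hq1
  intro k
  exact bound_logterm hq0 hq1 hθ k hz

lemma hasDerivAt_P0 {z : ℂ} (hz : z ∈ UU θ) : HasDerivAt (P0 q) (P1 q z) z := by
  apply hasDerivAt_tsum_of_isPreconnected
    (u := fun k => (|Real.log q| * q^(θ/2) / (1 - q^(θ/2))) * q^k)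
    ((summable_geometric_of_lt_one hq0.le hq1).mul_left _)
    (hU_open (θ := θ)) ((hU_conv (θ := θ)).isPreconnected)
    (fun k y hy => hasDerivAt_logterm hq0 hq1 hθ k hy)
    (fun k y hy => bound_logterm hq0 hq1 hθ k hy)
    (hθU hθ) (summable_logterm hq0 hq1 hθ (hθU hθ)) hz

lemma hasDerivAt_P1 {z : ℂ} (hz : z ∈ UU θ) : HasDerivAt (P1 q) (P2 q z) z := by
  apply hasDerivAt_tsum_of_isPreconnected
    (u := fun k => ((Real.log q)^2 * q^(θ/2) / (1 - q^(θ/2))^2) * q^k)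
    ((summable_geometric_of_lt_one hq0.le hq1).mul_left _)
    (hU_open (θ := θ)) ((hU_conv (θ := θ)).isPreconnected)
    (fun k y hy => hasDerivAt_P1term hq0 hq1 hθ k hy)
    (fun k y hy => bound_P1term hq0 hq1 hθ k hy)
    (hθU hθ) (summable_P1term hq0 hq1 hθ (hθU hθ)) hz

lemma qPoch_eq_exp {z : ℂ} (hz : z ∈ UU θ) :
    qPoch ((q:ℂ)^z) q = Complex.exp (P0 q z) := by
  rw [qPoch, P0]
  exact tprod_eq_exp _ (one_sub_wf_ne hq0 hq1 hθ hz) (summable_logterm hq0 hq1 hθ hz)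

omit hθ in
lemma qq_ne (k : ℕ) : (1 : ℂ) - (q:ℂ) * (q:ℂ)^k ≠ 0 := by
  have h : (1:ℂ) - (q:ℂ) * (q:ℂ)^k = ((1 - q*q^k : ℝ) : ℂ) := by push_cast; ring
  rw [h]
  have hk : q*q^k ≤ q*1 := by nlinarith [pow_le_one₀ hq0.le hq1.le (n := k), pow_pos hq0 k]
  have hpos : 0 < 1 - q*q^k := by nlinarith
  exact Complex.ofReal_ne_zero.mpr (ne_of_gt hpos)

omit hθ in
lemma summable_qq : Summable (fun k => Complex.log (1 - (q:ℂ) * (q:ℂ)^k)) := by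
  have h := summable_clog (fun k => -((q:ℂ) * (q:ℂ)^k)) q q hq0.le hq1 ?_
  · apply h.congr; intro k; rw [sub_eq_add_neg]
  · intro k
    rw [norm_neg, norm_mul, norm_pow]
    simp [Complex.norm_real, abs_of_pos hq0]

omit hθ in
lemma qPochqq_eq : qPoch q q = Complex.exp (∑' k, Complex.log (1 - (q:ℂ) * (q:ℂ)^k)) := by
  rw [qPoch]
  exact tprod_eq_exp _ (qq_ne hq0 hq1) (summable_qq hq0 hq1)

omit hθ in
lemma qPochqq_ne : qPoch q q ≠ 0 := by
  rw [qPochqq_eq hq0 hq1]; exact Complex.exp_ne_zero _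

lemma qGamma_eq_exp {z : ℂ} (hz : z ∈ UU θ) : qGamma q z = Complex.exp (Lf q z) := by
  have h1q : (1:ℂ) - (q:ℂ) ≠ 0 := by
    have : ((1 - q : ℝ):ℂ) ≠ 0 := Complex.ofReal_ne_zero.mpr (by linarith)
    simpa using this
  rw [qGamma, qPoch_eq_exp hq0 hq1 hθ hz, Complex.cpow_def_of_ne_zero h1q, Lf,
    Complex.exp_sub, Complex.exp_add, Complex.exp_log (qPochqq_ne hq0 hq1)]

lemma hasDerivAt_Lf {z : ℂ} (hz : z ∈ UU θ) : HasDerivAt (Lf q) (DD q z) z := by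
  have h1 : HasDerivAt (fun z : ℂ => Complex.log (1 - (q:ℂ)) * (1 - z))
      (Complex.log (1 - (q:ℂ)) * (0 - 1)) z :=
    ((hasDerivAt_const z (1:ℂ)).sub (hasDerivAt_id z)).const_mul _
  have h2 := (h1.add_const (Complex.log (qPoch q q))).sub (hasDerivAt_P0 hq0 hq1 hθ hz)
  have h3 : HasDerivAt (Lf q) (Complex.log (1 - (q:ℂ)) * (0-1) - P1 q z) z := h2
  convert h3 using 1
  rw [DD]; ring

lemma hasDerivAt_qGamma {z : ℂ} (hz : z ∈ UU θ) :
    HasDerivAt (qGamma q) (Complex.exp (Lf q z) * DD q z) z := by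
  apply ((hasDerivAt_Lf hq0 hq1 hθ hz).cexp).congr_of_eventuallyEq
  exact Filter.eventuallyEq_of_mem ((hU_open (θ := θ)).mem_nhds hz)
    (fun w hw => qGamma_eq_exp hq0 hq1 hθ hw)

lemma wf_theta (k : ℕ) : wf q k (θ:ℂ) = ((q^θ * q^k : ℝ) : ℂ) := by
  rw [wf, ← Complex.ofReal_cpow hq0.le]
  push_cast
  ring

lemma P0_theta : P0 q (θ:ℂ) = ((∑' k, Real.log (cc q θ k) : ℝ) : ℂ) := by
  rw [P0, Complex.ofReal_tsum]
  apply tsum_congr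
  intro k
  rw [wf_theta hq0 hq1 hθ, Complex.ofReal_log (hcc0 hq0 hq1 hθ k).le, cc]
  push_cast
  ring_nf

lemma P1_theta :
    P1 q (θ:ℂ) = ((∑' k, -(Real.log q) * (q^θ*q^k) / (cc q θ k) : ℝ) : ℂ) := by
  rw [P1, Complex.ofReal_tsum]
  apply tsum_congr
  intro k
  rw [wf_theta hq0 hq1 hθ]
  push_cast [cc]
  ring_nf

lemma P2_theta :
    P2 q (θ:ℂ) = ((∑' k, -(Real.log q)^2 * (q^θ*q^k) / (cc q θ k)^2 : ℝ) : ℂ) := by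
  rw [P2, Complex.ofReal_tsum]
  apply tsum_congr
  intro k
  rw [wf_theta hq0 hq1 hθ]
  push_cast [cc]
  ring_nf

end cx

section cx2
include hq0 hq1 hθ

omit hθ in
lemma SQ_real : (∑' k, Complex.log (1 - (q:ℂ) * (q:ℂ)^k))
    = ((∑' k, Real.log (1 - q*q^k) : ℝ) : ℂ) := by
  rw [Complex.ofReal_tsum]
  apply tsum_congr
  intro k
  have hk : q*q^k ≤ q*1 := by nlinarith [pow_le_one₀ hq0.le hq1.le (n := k), pow_pos hq0 k]
  have hpos : (0:ℝ) < 1 - q*q^k := by nlinarith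
  rw [Complex.ofReal_log hpos.le]
  push_cast
  ring_nf

omit hθ in
lemma log_qPochqq_real :
    Complex.log (qPoch q q) = ((Real.log (Real.exp (∑' k, Real.log (1 - q*q^k))) : ℝ) : ℂ) := by
  rw [qPochqq_eq hq0 hq1, SQ_real hq0 hq1, ← Complex.ofReal_exp,
    Complex.ofReal_log (Real.exp_pos _).le]

lemma Lf_theta_real : Lf q (θ:ℂ)
    = ((Real.log (1-q) * (1-θ) + Real.log (Real.exp (∑' k, Real.log (1 - q*q^k)))
        - ∑' k, Real.log (cc q θ k) : ℝ) : ℂ) := by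
  rw [Lf, P0_theta hq0 hq1 hθ, log_qPochqq_real hq0 hq1]
  have h1 : (1 : ℂ) - (q:ℂ) = ((1 - q : ℝ) : ℂ) := by push_cast; ring
  have h2 : (1 : ℂ) - (θ:ℂ) = ((1 - θ : ℝ) : ℂ) := by push_cast; ring
  rw [h1, h2, ← Complex.ofReal_log (by linarith : (0:ℝ) ≤ 1 - q)]
  push_cast
  ring

lemma qGamma_theta_pos : 0 < (qGamma q (θ:ℂ)).re := by
  rw [qGamma_eq_exp hq0 hq1 hθ (hθU hθ), Lf_theta_real hq0 hq1 hθ, ← Complex.ofReal_exp,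
    Complex.ofReal_re]
  exact Real.exp_pos _

def VV' : Set ℂ := UU θ ∩ {z | 0 < (qGamma q z).re}

lemma hV_open : IsOpen (VV' (q := q) (θ := θ)) := by
  rw [isOpen_iff_mem_nhds]
  rintro z ⟨hz1, hz2⟩
  apply Filter.inter_mem ((hU_open (θ := θ)).mem_nhds hz1)
  have hcont : ContinuousAt (fun w => (qGamma q w).re) z :=
    Complex.continuous_re.continuousAt.comp (hasDerivAt_qGamma hq0 hq1 hθ hz1).continuousAt
  exact hcont.preimage_mem_nhds (isOpen_Ioi.mem_nhds hz2)

lemma hθV : (θ:ℂ) ∈ VV' (q := q) (θ := θ) :=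
  ⟨hθU hθ, qGamma_theta_pos hq0 hq1 hθ⟩

lemma qDigamma_eq_DD {z : ℂ} (hz : z ∈ VV' (q := q) (θ := θ)) :
    qDigamma q z = DD q z := by
  have hslit : qGamma q z ∈ Complex.slitPlane := Complex.mem_slitPlane_iff.mpr (Or.inl hz.2)
  have hlog : HasDerivAt (fun w => Complex.log (qGamma q w))
      ((qGamma q z)⁻¹ * (Complex.exp (Lf q z) * DD q z)) z :=
    (Complex.hasDerivAt_log hslit).comp z (hasDerivAt_qGamma hq0 hq1 hθ hz.1)
  rw [qDigamma, hlog.deriv, qGamma_eq_exp hq0 hq1 hθ hz.1,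
    inv_mul_cancel_left₀ (Complex.exp_ne_zero _)]

lemma qDigamma_theta : qDigamma q (θ:ℂ) = DD q (θ:ℂ) :=
  qDigamma_eq_DD hq0 hq1 hθ (hθV hq0 hq1 hθ)

lemma deriv_qDigamma_theta : deriv (qDigamma q) (θ:ℂ) = -(P2 q (θ:ℂ)) := by
  have hev : qDigamma q =ᶠ[nhds (θ:ℂ)] DD q :=
    Filter.eventuallyEq_of_mem ((hV_open hq0 hq1 hθ).mem_nhds (hθV hq0 hq1 hθ))
      (fun w hw => qDigamma_eq_DD hq0 hq1 hθ hw)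
  rw [hev.deriv_eq]
  have h : HasDerivAt (DD q) (0 - P2 q (θ:ℂ)) (θ:ℂ) :=
    (hasDerivAt_const _ _).sub (hasDerivAt_P1 hq0 hq1 hθ (hθU hθ))
  rw [h.deriv]
  ring

end cx2

section ident
include hq0 hq1 hθ

lemma hL_neg : Real.log q < 0 := Real.log_neg hq0 hq1

lemma hL_ne : Real.log q ≠ 0 := ne_of_lt (hL_neg hq0 hq1 hθ)

lemma summable_xc2 : Summable (fun k => (q^θ*q^k)/(cc q θ k)^2) := by
  apply summable_geom_bound _ (q^θ/(1-q^θ)^2) q hq0.le hq1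
  intro k
  have hc := hcc0 hq0 hq1 hθ k
  have hcge := hcc_ge hq0 hq1 hθ k
  have hum := hum' hq0 hq1 hθ
  have ha := ha0 hq0 hq1 hθ
  have hqk : (0:ℝ) < q^k := pow_pos hq0 k
  calc ‖(q^θ*q^k)/(cc q θ k)^2‖ = (q^θ*q^k)/(cc q θ k)^2 := by
        rw [Real.norm_eq_abs, abs_of_pos (by positivity)]
    _ ≤ (q^θ*q^k)/(1-q^θ)^2 := by
        apply div_le_div_of_nonneg_left (by positivity) (by positivity)
        nlinarith
    _ = q^θ/(1-q^θ)^2 * q^k := by ring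

lemma summable_xc : Summable (fun k => (q^θ*q^k)/(cc q θ k)) := by
  apply summable_geom_bound _ (q^θ/(1-q^θ)) q hq0.le hq1
  intro k
  have hc := hcc0 hq0 hq1 hθ k
  have hcge := hcc_ge hq0 hq1 hθ k
  have hum := hum' hq0 hq1 hθ
  have ha := ha0 hq0 hq1 hθ
  have hqk : (0:ℝ) < q^k := pow_pos hq0 k
  calc ‖(q^θ*q^k)/(cc q θ k)‖ = (q^θ*q^k)/(cc q θ k) := by
        rw [Real.norm_eq_abs, abs_of_pos (by positivity)]
    _ ≤ (q^θ*q^k)/(1-q^θ) := div_le_div_of_nonneg_left (by positivity) hum hcge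
    _ = q^θ/(1-q^θ) * q^k := by ring

lemma neg_P2_theta :
    -(P2 q (θ:ℂ)) = ((∑' k, (Real.log q)^2 * (q^θ*q^k) / (cc q θ k)^2 : ℝ) : ℂ) := by
  rw [P2_theta hq0 hq1 hθ, ← Complex.ofReal_neg, ← tsum_neg]
  norm_num
  apply tsum_congr
  intro k
  ring

lemma S2_eq : (∑' k, (Real.log q)^2 * (q^θ*q^k) / (cc q θ k)^2 : ℝ)
    = krS q θ * ((Real.log q)^2 * q^θ) := by
  rw [krS, ← tsum_mul_right]
  apply tsum_congr
  intro k
  rw [ys]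
  ring

lemma S2_eq' : (∑' k, (Real.log q)^2 * (q^θ*q^k) / (cc q θ k)^2 : ℝ)
    = (∑' k, (q^θ*q^k)/(cc q θ k)^2) * (Real.log q)^2 := by
  rw [← tsum_mul_right]
  apply tsum_congr
  intro k
  ring

lemma T1_eq : (∑' k, -(Real.log q) * (q^θ*q^k) / (cc q θ k) : ℝ)
    = (∑' k, (q^θ*q^k)/(cc q θ k)) * (-(Real.log q)) := by
  rw [← tsum_mul_right]
  apply tsum_congr
  intro k
  ring

lemma kappa_eq : kappaC q θ = ((krS q θ : ℝ) : ℂ) := by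
  have ha := ha0 hq0 hq1 hθ
  have hL := hL_ne hq0 hq1 hθ
  rw [kappaC, deriv_qDigamma_theta hq0 hq1 hθ, neg_P2_theta hq0 hq1 hθ,
    ← Complex.ofReal_cpow hq0.le θ]
  rw [show ((Real.log q : ℝ):ℂ)^2 * ((q^θ : ℝ):ℂ) = (((Real.log q)^2 * q^θ : ℝ) : ℂ) by
    push_cast; ring]
  rw [← Complex.ofReal_div, S2_eq hq0 hq1 hθ,
    mul_div_cancel_right₀ _ (by positivity : ((Real.log q)^2 * q^θ : ℝ) ≠ 0)]

lemma DD_theta_real : DD q (θ:ℂ)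
    = ((-Real.log (1-q) - ∑' k, -(Real.log q) * (q^θ*q^k) / (cc q θ k) : ℝ) : ℂ) := by
  rw [DD, P1_theta hq0 hq1 hθ]
  have h1 : (1 : ℂ) - (q:ℂ) = ((1 - q : ℝ) : ℂ) := by push_cast; ring
  rw [h1, ← Complex.ofReal_log (by linarith : (0:ℝ) ≤ 1 - q)]
  push_cast
  ring

lemma fC_eq : fC q θ = ((frS q θ : ℝ) : ℂ) := by
  have hL := hL_ne hq0 hq1 hθ
  have hL2 : ((Real.log q)^2 : ℝ) ≠ 0 := by positivity
  rw [fC, deriv_qDigamma_theta hq0 hq1 hθ, neg_P2_theta hq0 hq1 hθ,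
    qDigamma_theta hq0 hq1 hθ, DD_theta_real hq0 hq1 hθ]
  rw [show ((Real.log q : ℝ):ℂ)^2 = (((Real.log q)^2 : ℝ):ℂ) by push_cast; ring]
  rw [← Complex.ofReal_div, ← Complex.ofReal_div, ← Complex.ofReal_div,
    ← Complex.ofReal_sub, ← Complex.ofReal_sub]
  congr 1
  have e1 : (∑' k, (Real.log q)^2 * (q^θ*q^k) / (cc q θ k)^2 : ℝ)/(Real.log q)^2
      = ∑' k, (q^θ*q^k)/(cc q θ k)^2 := by
    rw [S2_eq' hq0 hq1 hθ, mul_div_cancel_right₀ _ hL2]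
  have e3 : (∑' k, (Real.log q)^2 * (q^θ*q^k) / (cc q θ k)^2 : ℝ)/(Real.log q)^2
      - (-Real.log (1-q) - ∑' k, -(Real.log q) * (q^θ*q^k) / (cc q θ k))/(Real.log q)
      - Real.log (1-q)/(Real.log q)
      = (∑' k, (q^θ*q^k)/(cc q θ k)^2) - (∑' k, (q^θ*q^k)/(cc q θ k)) := by
    rw [e1, T1_eq hq0 hq1 hθ]
    field_simp
    ring
  rw [e3, ← Summable.tsum_sub (summable_xc2 hq0 hq1 hθ) (summable_xc hq0 hq1 hθ), frS]
  apply tsum_congr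
  intro k
  have hc := (hcc0 hq0 hq1 hθ k).ne'
  rw [xs, cc] at *
  field_simp
  ring

end ident

section final
include hq0 hq1 hθ

lemma hLc_ne : ((Real.log q : ℝ) : ℂ) ≠ 0 :=
  Complex.ofReal_ne_zero.mpr (hL_ne hq0 hq1 hθ)

lemma Wc_eq {s : ℝ} (hs : 0 < s) :
    Wc q θ s = Complex.log (Af q θ s) / ((Real.log q : ℝ) : ℂ) := by
  rw [Wc, abs_of_pos hs, Real.sign_of_pos hs, Af, ← Complex.ofReal_cpow hq0.le, ee]
  norm_num

lemma cpow_Wc {s : ℝ} (hs : 0 < s) : (q:ℂ) ^ (Wc q θ s) = Af q θ s := by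
  rw [Wc_eq hq0 hq1 hθ hs, Complex.cpow_def_of_ne_zero (Complex.ofReal_ne_zero.mpr hq0.ne'),
    ← Complex.ofReal_log hq0.le, mul_div_cancel₀ _ (hLc_ne hq0 hq1 hθ),
    Complex.exp_log (Af_ne hq0 hq1 hθ s)]

lemma qPoch_Af (s : ℝ) :
    qPoch (Af q θ s) q = Complex.exp (∑' k, Complex.log (Bf q θ k s)) := by
  rw [qPoch]
  exact tprod_eq_exp _ (fun k => Bf_ne hq0 hq1 hθ k s) (summable_clog_Bf hq0 hq1 hθ s)

lemma re_log_qPoch (s : ℝ) :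
    (Complex.log (qPoch (Af q θ s) q)).re = ∑' k, gf q θ k s := by
  rw [qPoch_Af hq0 hq1 hθ, Complex.log_re, Complex.norm_exp, Real.log_exp,
    Complex.re_tsum (summable_clog_Bf hq0 hq1 hθ s)]
  apply tsum_congr
  intro k
  rw [gf, Complex.log_re]

lemma F_eq_GG {s : ℝ} (hs : 0 < s) : (f0 q θ (Wc q θ s)).re = GG q θ s := by
  have hterm1 : -fC q θ * ((Real.log q : ℝ):ℂ) * (Wc q θ s)
      = ((-frS q θ : ℝ) : ℂ) * Complex.log (Af q θ s) := by
    rw [fC_eq hq0 hq1 hθ, Wc_eq hq0 hq1 hθ hs]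
    have := hLc_ne hq0 hq1 hθ
    field_simp
    push_cast
    ring
  rw [f0, hterm1, cpow_Wc hq0 hq1 hθ hs, kappa_eq hq0 hq1 hθ]
  rw [Complex.add_re, Complex.add_re, Complex.re_ofReal_mul, Complex.re_ofReal_mul,
    re_log_qPoch hq0 hq1 hθ, Complex.log_re, Complex.norm_def, normSq_Af,
    Real.log_sqrt (hal_pos hq0 hq1 s).le, Af_re, GG]
  ring

lemma F_eventuallyEq {s₀ : ℝ} (hs₀ : 0 < s₀) :
    (fun u => (f0 q θ (Wc q θ u)).re) =ᶠ[nhds s₀] GG q θ :=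
  Filter.eventuallyEq_of_mem (isOpen_Ioi.mem_nhds hs₀) (fun s hs => F_eq_GG hq0 hq1 hθ hs)

end final

/-- the target summand of the theorem -/
def tt (q θ : ℝ) (s : ℝ) (k : ℕ) : ℝ :=
  q ^ (2 * k) * s ^ 2 * (Real.sqrt 2 / 2) *
      (q ^ (k : ℝ) * s ^ 2 + q ^ θ * (1 - q ^ (θ + (k : ℝ)))) /
    ((1 - q ^ (θ + (k : ℝ))) ^ 2 *
      ‖(1 - (q : ℂ) ^ ((θ : ℂ) + (k : ℂ))
        - Complex.exp (Complex.I * (Real.pi / 4)) * s * (q : ℂ) ^ (k : ℕ) : ℂ)‖ ^ 2 *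
      ‖((q : ℂ) ^ (θ : ℂ) + Complex.exp (Complex.I * (Real.pi / 4)) * s : ℂ)‖ ^ 2)

section final2
include hq0 hq1 hθ

lemma rpow_theta_k (k : ℕ) : q ^ (θ + (k:ℝ)) = q^θ * q^k := by
  rw [Real.rpow_add hq0, Real.rpow_natCast]

lemma cpow_theta_k (k : ℕ) : (q:ℂ) ^ ((θ:ℂ)+(k:ℂ)) = ((q^θ * q^k : ℝ) : ℂ) := by
  rw [show (θ:ℂ)+(k:ℂ) = ((θ + (k:ℝ) : ℝ):ℂ) by push_cast; ring,
    ← Complex.ofReal_cpow hq0.le, rpow_theta_k hq0 hq1 hθ]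

lemma Bf_target (k : ℕ) (s : ℝ) :
    1 - (q:ℂ) ^ ((θ:ℂ)+(k:ℂ)) - Complex.exp (Complex.I * (Real.pi / 4)) * s * (q:ℂ)^k
      = Bf q θ k s := by
  rw [cpow_theta_k hq0 hq1 hθ, Bf, Af, ← ee]
  push_cast
  ring

lemma Af_target (s : ℝ) :
    (q:ℂ) ^ (θ:ℂ) + Complex.exp (Complex.I * (Real.pi / 4)) * s = Af q θ s := by
  rw [← Complex.ofReal_cpow hq0.le, Af, ← ee]
  ring

lemma tt_eq (s : ℝ) (k : ℕ) :
    tt q θ s k = (q^k)^2*s^2*(rr/2)*(q^k*s^2 + q^θ*(cc q θ k))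
      / ((cc q θ k)^2 * be q θ k s * al q θ s) := by
  rw [tt, Bf_target hq0 hq1 hθ, Af_target hq0 hq1 hθ, Complex.sq_norm, Complex.sq_norm,
    normSq_Bf, normSq_Af, rpow_theta_k hq0 hq1 hθ, Real.rpow_natCast,
    mul_comm 2 k, pow_mul, cc, rr]

lemma term_eq (s : ℝ) (k : ℕ) :
    xs q θ k * (-((rr*q^θ + 2*s)/(2 * al q θ s))) + ys q θ k * (rr/2) + gd q θ k s
      = tt q θ s k := by
  rw [tt_eq hq0 hq1 hθ, xs, ys, gd]
  have h := key_frac rr (q^θ) (q^k) s (cc q θ k) (al q θ s) (be q θ k s) hrr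
    (by rw [cc]) (by rw [al]) (by rw [be])
    (hcc0 hq0 hq1 hθ k).ne' (hal_pos hq0 hq1 s).ne' (hbe_pos hq0 hq1 hθ k s).ne'
  calc (q^θ*q^k)^2/(cc q θ k)^2 * (-((rr*q^θ + 2*s)/(2 * al q θ s)))
        + q^k/(cc q θ k)^2 * (rr/2) + (2*(q^k)^2*s - rr * cc q θ k * q^k)/(2 * be q θ k s)
      = -((q^θ*(q^k))^2/(cc q θ k)^2)*((rr*(q^θ)+2*s)/(2*(al q θ s)))
        + ((q^k)/(cc q θ k)^2)*(rr/2)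
        + (2*(q^k)^2*s - rr*(cc q θ k)*(q^k))/(2*(be q θ k s)) := by ring
    _ = (q^k)^2*s^2*(rr/2)*((q^k)*s^2+(q^θ)*(cc q θ k))
        /((cc q θ k)^2*(be q θ k s)*(al q θ s)) := h
    _ = (q^k)^2*s^2*(rr/2)*(q^k*s^2 + q^θ*(cc q θ k))
        / ((cc q θ k)^2 * be q θ k s * al q θ s) := by ring

lemma GD_eq_tsum_tt (s : ℝ) : GD q θ s = ∑' k, tt q θ s k := by
  have S1 : Summable (fun k => xs q θ k * (-((rr*q^θ + 2*s)/(2 * al q θ s)))) :=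
    (summable_xs hq0 hq1 hθ).mul_right _
  have S2 : Summable (fun k => ys q θ k * (rr/2)) :=
    (summable_ys hq0 hq1 hθ).mul_right _
  have S3 := summable_gd hq0 hq1 hθ s
  calc GD q θ s
      = (∑' k, xs q θ k) * (-((rr*q^θ + 2*s)/(2 * al q θ s)))
        + (∑' k, ys q θ k) * (rr/2) + ∑' k, gd q θ k s := by
        rw [GD, frS, krS]; ring
    _ = (∑' k, xs q θ k * (-((rr*q^θ + 2*s)/(2 * al q θ s))))
        + (∑' k, ys q θ k * (rr/2)) + ∑' k, gd q θ k s := by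
        rw [tsum_mul_right, tsum_mul_right]
    _ = ∑' k, (xs q θ k * (-((rr*q^θ + 2*s)/(2 * al q θ s))) + ys q θ k * (rr/2)
        + gd q θ k s) := by
        rw [Summable.tsum_add (S1.add S2) S3, Summable.tsum_add S1 S2]
    _ = ∑' k, tt q θ s k := tsum_congr (fun k => term_eq hq0 hq1 hθ s k)

lemma summable_tt (s : ℝ) : Summable (fun k => tt q θ s k) := by
  apply Summable.congr _ (fun k => term_eq hq0 hq1 hθ s k)
  exact (((summable_xs hq0 hq1 hθ).mul_right _).add
    ((summable_ys hq0 hq1 hθ).mul_right _)).add (summable_gd hq0 hq1 hθ s)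

lemma tt_pos {s : ℝ} (hs : 0 < s) (k : ℕ) : 0 < tt q θ s k := by
  rw [tt_eq hq0 hq1 hθ]
  have hc := hcc0 hq0 hq1 hθ k
  have hbe := hbe_pos hq0 hq1 hθ k s
  have hal := hal_pos hq0 hq1 (θ := θ) s
  have ha := ha0 hq0 hq1 hθ
  have hqk : (0:ℝ) < q^k := pow_pos hq0 k
  have hr := hrr0
  apply div_pos
  · apply mul_pos (mul_pos (mul_pos (by positivity) (by positivity)) (by positivity))
    positivity
  · positivity

lemma tsum_tt_pos {s : ℝ} (hs : 0 < s) : 0 < ∑' k, tt q θ s k :=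
  Summable.tsum_pos (summable_tt hq0 hq1 hθ s) (fun k => (tt_pos hq0 hq1 hθ hs k).le) 0
    (tt_pos hq0 hq1 hθ hs 0)

lemma deriv_F {s : ℝ} (hs : 0 < s) :
    deriv (fun u : ℝ => (f0 q θ (Wc q θ u)).re) s = ∑' k, tt q θ s k := by
  rw [(F_eventuallyEq hq0 hq1 hθ hs).deriv_eq, (hasDerivAt_GG hq0 hq1 hθ s).deriv,
    GD_eq_tsum_tt hq0 hq1 hθ]

end final2

end SD

end SDaux

theorem f0_steep_descent (q θ : ℝ) (hq0 : 0 < q) (hq1 : q < 1) (hθ : 0 < θ) :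
    (∀ s : ℝ, 0 < s →
      deriv (fun u : ℝ => (f0 q θ (Wc q θ u)).re) s =
        ∑' k : ℕ, q ^ (2 * k) * s ^ 2 * (Real.sqrt 2 / 2) *
            (q ^ (k : ℝ) * s ^ 2 + q ^ θ * (1 - q ^ (θ + (k : ℝ)))) /
          ((1 - q ^ (θ + (k : ℝ))) ^ 2 *
            ‖(1 - (q : ℂ) ^ ((θ : ℂ) + (k : ℂ))
              - Complex.exp (Complex.I * (Real.pi / 4)) * s * (q : ℂ) ^ (k : ℕ) : ℂ)‖ ^ 2 *
            ‖((q : ℂ) ^ (θ : ℂ) + Complex.exp (Complex.I * (Real.pi / 4)) * s : ℂ)‖ ^ 2) ∧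
      0 < ∑' k : ℕ, q ^ (2 * k) * s ^ 2 * (Real.sqrt 2 / 2) *
            (q ^ (k : ℝ) * s ^ 2 + q ^ θ * (1 - q ^ (θ + (k : ℝ)))) /
          ((1 - q ^ (θ + (k : ℝ))) ^ 2 *
            ‖(1 - (q : ℂ) ^ ((θ : ℂ) + (k : ℂ))
              - Complex.exp (Complex.I * (Real.pi / 4)) * s * (q : ℂ) ^ (k : ℕ) : ℂ)‖ ^ 2 *
            ‖((q : ℂ) ^ (θ : ℂ) + Complex.exp (Complex.I * (Real.pi / 4)) * s : ℂ)‖ ^ 2))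
    ∧ StrictMonoOn (fun s : ℝ => (f0 q θ (Wc q θ s)).re) (Set.Ioi 0) := by
  constructor
  · intro s hs
    constructor
    · exact SD.deriv_F hq0 hq1 hθ hs
    · exact SD.tsum_tt_pos hq0 hq1 hθ hs
  · apply strictMonoOn_of_deriv_pos (convex_Ioi 0)
    · intro s hs
      rw [Set.mem_Ioi] at hs
      exact ((continuousAt_congr (SD.F_eventuallyEq hq0 hq1 hθ hs)).mpr
        (SD.hasDerivAt_GG hq0 hq1 hθ s).continuousAt).continuousWithinAt
    · intro s hs
      rw [interior_Ioi, Set.mem_Ioi] at hs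
      rw [SD.deriv_F hq0 hq1 hθ hs]
      exact SD.tsum_tt_pos hq0 hq1 hθ hs
end

section
/- Fix 0 < q < 1, θ > 0, and α with 0 < α < q^θ; set A = log_q(α) (so A > θ). With g_0 as above, g_0''(A) = Ψ'_q(θ) q^{A-θ} - Ψ'_q(A) = (log q)^2 Σ_{k=0}^∞ q^{A+k} ( 1/(1-q^{θ+k})^2 - 1/(1-q^{A+k})^2 ) > 0. -/
set_option linter.unusedSectionVars false
open Filter Topology


open Complex Real

/-- `A = log_q α`. -/
noncomputable def Aq (q α : ℝ) : ℝ := Real.log α / Real.log q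

/-- `g(q,θ) = (Ψ'_q(θ)/(log q)^2)(α/q^θ) - Ψ_q(A)/log q - log(1-q)/log q`. -/
noncomputable def gC (q θ α : ℝ) : ℂ :=
  deriv (qDigamma q) (θ : ℂ) / ((Real.log q : ℂ)) ^ 2 * ((α : ℂ) / (q : ℂ) ^ (θ : ℂ))
    - qDigamma q ((Aq q α : ℝ) : ℂ) / (Real.log q : ℂ)
    - (Real.log (1 - q) : ℂ) / (Real.log q : ℂ)

/-- `g₀(Z) = -g (log q) Z + κ q^Z + log((q^Z; q)_∞)`. -/
noncomputable def g0 (q θ α : ℝ) (Z : ℂ) : ℂ :=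
  -gC q θ α * (Real.log q : ℂ) * Z + kappaC q θ * (q : ℂ) ^ Z
    + Complex.log (qPoch ((q : ℂ) ^ Z) (q : ℂ))


noncomputable def qv (q : ℝ) (k : ℕ) (w : ℂ) : ℂ := (q : ℂ) ^ w * (q : ℂ) ^ k
noncomputable def qt0 (q : ℝ) (k : ℕ) (w : ℂ) : ℂ := Complex.log (1 - qv q k w)
noncomputable def qt1 (q : ℝ) (k : ℕ) (w : ℂ) : ℂ :=
  -(Real.log q : ℂ) * qv q k w / (1 - qv q k w)
noncomputable def qt2 (q : ℝ) (k : ℕ) (w : ℂ) : ℂ :=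
  -(Real.log q : ℂ) ^ 2 * qv q k w / (1 - qv q k w) ^ 2
noncomputable def qS0 (q : ℝ) (w : ℂ) : ℂ := ∑' k : ℕ, qt0 q k w
noncomputable def qS1 (q : ℝ) (w : ℂ) : ℂ := ∑' k : ℕ, qt1 q k w
noncomputable def qS2 (q : ℝ) (w : ℂ) : ℂ := ∑' k : ℕ, qt2 q k w

section basic
variable {q : ℝ} (hq0 : 0 < q) (hq1 : q < 1)
include hq0

lemma qcpow (w : ℂ) : (q : ℂ) ^ w = Complex.exp (w * (Real.log q : ℂ)) := by
  rw [Complex.cpow_def_of_ne_zero (by exact_mod_cast hq0.ne'), Complex.ofReal_log hq0.le,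
    mul_comm]

lemma qv_exp (k : ℕ) (w : ℂ) :
    qv q k w = Complex.exp ((w + (k : ℂ)) * (Real.log q : ℂ)) := by
  have h1 : (q : ℂ) ^ (k : ℕ) = (q : ℂ) ^ ((k : ℕ) : ℂ) := (Complex.cpow_natCast _ _).symm
  rw [qv, h1, qcpow hq0, qcpow hq0, ← Complex.exp_add, add_mul]

lemma qv_norm (k : ℕ) (w : ℂ) :
    ‖qv q k w‖ = Real.exp ((w.re + k) * Real.log q) := by
  rw [qv_exp hq0, Complex.norm_exp]
  congr 1
  simp

lemma qrpow_exp (r : ℝ) : q ^ r = Real.exp (r * Real.log q) := by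
  rw [Real.rpow_def_of_pos hq0, mul_comm]

lemma qv_norm_le (k : ℕ) {r : ℝ} {w : ℂ} (hw : r ≤ w.re) (hL : Real.log q < 0) :
    ‖qv q k w‖ ≤ q ^ r * q ^ k := by
  rw [qv_norm hq0]
  have : q ^ r * q ^ k = Real.exp ((r + k) * Real.log q) := by
    rw [qrpow_exp hq0, ← Real.exp_log (pow_pos hq0 k), ← Real.exp_add]
    congr 1
    rw [Real.log_pow]
    ring
  rw [this]
  apply Real.exp_le_exp.2
  nlinarith [hw]

lemma qv_norm_lt_one (k : ℕ) {w : ℂ} (hw : 0 < w.re) (hL : Real.log q < 0) :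
    ‖qv q k w‖ < 1 := by
  rw [qv_norm hq0, ← Real.exp_zero]
  apply Real.exp_lt_exp.2
  have : (0:ℝ) < w.re + k := by positivity
  nlinarith

lemma one_sub_qv_re (k : ℕ) {w : ℂ} (hw : 0 < w.re) (hL : Real.log q < 0) :
    0 < (1 - qv q k w).re := by
  have h := qv_norm_lt_one hq0 k hw hL
  have h2 : (qv q k w).re ≤ ‖qv q k w‖ := Complex.re_le_norm _
  simp only [Complex.sub_re, Complex.one_re]
  linarith

lemma one_sub_qv_mem (k : ℕ) {w : ℂ} (hw : 0 < w.re) (hL : Real.log q < 0) :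
    (1 - qv q k w) ∈ Complex.slitPlane :=
  Or.inl (one_sub_qv_re hq0 k hw hL)

lemma one_sub_qv_ne (k : ℕ) {w : ℂ} (hw : 0 < w.re) (hL : Real.log q < 0) :
    (1 - qv q k w) ≠ 0 :=
  Complex.slitPlane_ne_zero (one_sub_qv_mem hq0 k hw hL)

lemma one_sub_qv_norm (k : ℕ) (w : ℂ) :
    1 - ‖qv q k w‖ ≤ ‖1 - qv q k w‖ := by
  have := norm_sub_norm_le (1 : ℂ) (qv q k w)
  simpa using this

lemma hasDerivAt_qv (k : ℕ) (w : ℂ) :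
    HasDerivAt (qv q k) ((Real.log q : ℂ) * qv q k w) w := by
  have h : HasDerivAt (fun w : ℂ => (w + (k : ℂ)) * (Real.log q : ℂ))
      (Real.log q : ℂ) w := by
    simpa using ((hasDerivAt_id w).add_const (k : ℂ)).mul_const (Real.log q : ℂ)
  have := h.cexp
  rw [← qv_exp hq0] at this
  exact (this.congr_deriv (mul_comm _ _)).congr_of_eventuallyEq
    (Filter.Eventually.of_forall fun z => qv_exp hq0 k z)

lemma hasDerivAt_one_sub_qv (k : ℕ) (w : ℂ) :
    HasDerivAt (fun w => 1 - qv q k w) (-((Real.log q : ℂ) * qv q k w)) w :=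
  (hasDerivAt_qv hq0 k w).const_sub 1

lemma hasDerivAt_qt0 (k : ℕ) {w : ℂ} (hw : 0 < w.re) (hL : Real.log q < 0) :
    HasDerivAt (qt0 q k) (qt1 q k w) w := by
  have h := (hasDerivAt_one_sub_qv hq0 k w).clog (one_sub_qv_mem hq0 k hw hL)
  refine h.congr_deriv ?_
  rw [qt1]; ring

lemma hasDerivAt_qt1 (k : ℕ) {w : ℂ} (hw : 0 < w.re) (hL : Real.log q < 0) :
    HasDerivAt (qt1 q k) (qt2 q k w) w := by
  have hne := one_sub_qv_ne hq0 k hw hL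
  have h := ((hasDerivAt_qv hq0 k w).div (hasDerivAt_one_sub_qv hq0 k w) hne).const_mul
    (-(Real.log q : ℂ))
  have hf : ∀ z, qt1 q k z = -(Real.log q : ℂ) * (qv q k z / (1 - qv q k z)) :=
    fun z => by rw [qt1]; ring
  refine (h.congr_deriv ?_).congr_of_eventuallyEq (Filter.Eventually.of_forall hf)
  rw [qt2]; ring

end basic
section series
variable {q : ℝ} (hq0 : 0 < q) (hq1 : q < 1)
include hq0 hq1

lemma qgeo : Summable (fun k : ℕ => q ^ k) :=
  summable_geometric_of_lt_one hq0.le hq1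

lemma qL_neg : Real.log q < 0 := Real.log_neg hq0 hq1

lemma qrpow_lt_one {r : ℝ} (hr : 0 < r) : q ^ r < 1 :=
  Real.rpow_lt_one hq0.le hq1 hr

lemma qt1_bound {r : ℝ} (hr : 0 < r) (k : ℕ) {w : ℂ} (hw : r ≤ w.re) :
    ‖qt1 q k w‖ ≤ |Real.log q| * q ^ r / (1 - q ^ r) * q ^ k := by
  have hL := qL_neg hq0 hq1
  have hv : ‖qv q k w‖ ≤ q ^ r * q ^ k := qv_norm_le hq0 k hw hL
  have hq1' : q ^ r < 1 := qrpow_lt_one hq0 hq1 hr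
  have hqk : q ^ k ≤ 1 := pow_le_one₀ hq0.le hq1.le
  have hvr : ‖qv q k w‖ ≤ q ^ r := le_trans hv (by nlinarith [Real.rpow_pos_of_pos hq0 r])
  have hden : 1 - q ^ r ≤ ‖1 - qv q k w‖ :=
    le_trans (by linarith) (one_sub_qv_norm hq0 k w)
  rw [qt1, norm_div, norm_mul]
  have h1 : ‖-(Real.log q : ℂ)‖ = |Real.log q| := by
    rw [norm_neg, Complex.norm_real, Real.norm_eq_abs]
  rw [h1]
  have key : |Real.log q| * ‖qv q k w‖ / ‖1 - qv q k w‖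
      ≤ |Real.log q| * (q ^ r * q ^ k) / (1 - q ^ r) := by
    apply div_le_div₀ (by positivity) (mul_le_mul_of_nonneg_left hv (abs_nonneg _))
      (by linarith) hden
  refine le_trans key (le_of_eq ?_)
  ring

lemma qt2_bound {r : ℝ} (hr : 0 < r) (k : ℕ) {w : ℂ} (hw : r ≤ w.re) :
    ‖qt2 q k w‖ ≤ (Real.log q) ^ 2 * q ^ r / (1 - q ^ r) ^ 2 * q ^ k := by
  have hL := qL_neg hq0 hq1
  have hv : ‖qv q k w‖ ≤ q ^ r * q ^ k := qv_norm_le hq0 k hw hL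
  have hq1' : q ^ r < 1 := qrpow_lt_one hq0 hq1 hr
  have hqk : q ^ k ≤ 1 := pow_le_one₀ hq0.le hq1.le
  have hvr : ‖qv q k w‖ ≤ q ^ r := le_trans hv (by nlinarith [Real.rpow_pos_of_pos hq0 r])
  have hden : 1 - q ^ r ≤ ‖1 - qv q k w‖ :=
    le_trans (by linarith) (one_sub_qv_norm hq0 k w)
  have hdenpos : (0:ℝ) < 1 - q ^ r := by linarith
  rw [qt2, norm_div, norm_mul, norm_pow]
  have h1 : ‖-(Real.log q : ℂ) ^ 2‖ = (Real.log q) ^ 2 := by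
    rw [norm_neg, norm_pow, Complex.norm_real, Real.norm_eq_abs]
    exact sq_abs _
  rw [h1]
  have key : (Real.log q) ^ 2 * ‖qv q k w‖ / ‖1 - qv q k w‖ ^ 2
      ≤ (Real.log q) ^ 2 * (q ^ r * q ^ k) / (1 - q ^ r) ^ 2 := by
    apply div_le_div₀ (by positivity) (mul_le_mul_of_nonneg_left hv (by positivity))
      (by positivity) (pow_le_pow_left₀ hdenpos.le hden 2)
  refine le_trans key (le_of_eq ?_)
  ring

lemma qt0_summable {w : ℂ} (hw : 0 < w.re) : Summable (fun k => qt0 q k w) := by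
  have hL := qL_neg hq0 hq1
  apply Summable.of_norm_bounded_eventually_nat (g := fun k => 3/2 * (q ^ w.re * q ^ k))
  · exact (Summable.mul_left _ (qgeo hq0 hq1)).mul_left _
  · have htend : Tendsto (fun k : ℕ => q ^ w.re * q ^ k) atTop (𝓝 (q ^ w.re * 0)) :=
      (tendsto_pow_atTop_nhds_zero_of_lt_one hq0.le hq1).const_mul _
    rw [mul_zero] at htend
    filter_upwards [htend.eventually_le_const (by norm_num : (0:ℝ) < 1/2)] with k hk
    have hv : ‖qv q k w‖ ≤ q ^ w.re * q ^ k := qv_norm_le hq0 k le_rfl hL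
    have hv2 : ‖qv q k w‖ ≤ 1/2 := le_trans hv hk
    have := Complex.norm_log_one_add_half_le_self (z := -qv q k w) (by rwa [norm_neg])
    rw [qt0]
    have heq : 1 - qv q k w = 1 + -qv q k w := by ring
    rw [heq]
    refine le_trans this ?_
    rw [norm_neg]
    nlinarith [norm_nonneg (qv q k w)]

lemma qt1_summable {w : ℂ} (hw : 0 < w.re) : Summable (fun k => qt1 q k w) := by
  apply Summable.of_norm_bounded ((Summable.mul_left _ (qgeo hq0 hq1)))
  exact fun k => qt1_bound hq0 hq1 hw k le_rfl

lemma qt2_summable {w : ℂ} (hw : 0 < w.re) : Summable (fun k => qt2 q k w) := by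
  apply Summable.of_norm_bounded ((Summable.mul_left _ (qgeo hq0 hq1)))
  exact fun k => qt2_bound hq0 hq1 hw k le_rfl

lemma hasDerivAt_qS0 {w : ℂ} (hw : 0 < w.re) : HasDerivAt (qS0 q) (qS1 q w) w := by
  have hr : 0 < w.re / 2 := by linarith
  have hopen : IsOpen {z : ℂ | w.re / 2 < z.re} := isOpen_lt continuous_const Complex.continuous_re
  have hconv : IsPreconnected {z : ℂ | w.re / 2 < z.re} :=
    (convex_halfSpace_re_gt (w.re/2)).isPreconnected
  refine hasDerivAt_tsum_of_isPreconnected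
    ((Summable.mul_left (|Real.log q| * q ^ (w.re/2) / (1 - q ^ (w.re/2))) (qgeo hq0 hq1)))
    hopen hconv (fun k y hy => hasDerivAt_qt0 hq0 k (lt_trans hr hy) (qL_neg hq0 hq1))
    (fun k y hy => qt1_bound hq0 hq1 hr k (le_of_lt hy))
    (by simp [hw] : w ∈ {z : ℂ | w.re / 2 < z.re}) (qt0_summable hq0 hq1 hw)
    (by simp [hw] : w ∈ {z : ℂ | w.re / 2 < z.re})

lemma hasDerivAt_qS1 {w : ℂ} (hw : 0 < w.re) : HasDerivAt (qS1 q) (qS2 q w) w := by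
  have hr : 0 < w.re / 2 := by linarith
  have hopen : IsOpen {z : ℂ | w.re / 2 < z.re} := isOpen_lt continuous_const Complex.continuous_re
  have hconv : IsPreconnected {z : ℂ | w.re / 2 < z.re} :=
    (convex_halfSpace_re_gt (w.re/2)).isPreconnected
  refine hasDerivAt_tsum_of_isPreconnected
    ((Summable.mul_left ((Real.log q)^2 * q ^ (w.re/2) / (1 - q ^ (w.re/2))^2) (qgeo hq0 hq1)))
    hopen hconv (fun k y hy => hasDerivAt_qt1 hq0 k (lt_trans hr hy) (qL_neg hq0 hq1))
    (fun k y hy => qt2_bound hq0 hq1 hr k (le_of_lt hy))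
    (by simp [hw] : w ∈ {z : ℂ | w.re / 2 < z.re}) (qt1_summable hq0 hq1 hw)
    (by simp [hw] : w ∈ {z : ℂ | w.re / 2 < z.re})

end series
section prod
variable {q : ℝ} (hq0 : 0 < q) (hq1 : q < 1)
include hq0 hq1

lemma qPoch_eq_exp {w : ℂ} (hw : 0 < w.re) :
    qPoch ((q : ℂ) ^ w) (q : ℂ) = Complex.exp (qS0 q w) := by
  have h2 := Complex.cexp_tsum_eq_tprod (f := fun k => 1 - qv q k w)
    (fun k => one_sub_qv_ne hq0 k hw (qL_neg hq0 hq1))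
    (qt0_summable hq0 hq1 hw)
  rw [qPoch, qS0]
  exact h2.symm

/-- real-term description -/
lemma qv_real (x : ℝ) (k : ℕ) :
    qv q k (x : ℂ) = ((q ^ (x + (k : ℝ)) : ℝ) : ℂ) := by
  rw [qv, ← Complex.ofReal_cpow hq0.le, Real.rpow_add hq0, Real.rpow_natCast]
  push_cast
  ring

lemma qp_pos (x : ℝ) (k : ℕ) : 0 < q ^ (x + (k : ℝ)) := Real.rpow_pos_of_pos hq0 _

lemma qp_lt_one {x : ℝ} (hx : 0 < x) (k : ℕ) : q ^ (x + (k : ℝ)) < 1 :=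
  Real.rpow_lt_one hq0.le hq1 (by positivity)

lemma qt0_real {x : ℝ} (hx : 0 < x) (k : ℕ) :
    qt0 q k (x : ℂ) = ((Real.log (1 - q ^ (x + (k : ℝ))) : ℝ) : ℂ) := by
  rw [qt0, qv_real hq0 hq1, Complex.ofReal_log (by linarith [qp_lt_one hq0 hq1 hx k])]
  push_cast
  ring_nf

lemma qt1_real {x : ℝ} (hx : 0 < x) (k : ℕ) :
    qt1 q k (x : ℂ)
      = ((-Real.log q * q ^ (x + (k : ℝ)) / (1 - q ^ (x + (k : ℝ))) : ℝ) : ℂ) := by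
  rw [qt1, qv_real hq0 hq1]
  push_cast
  ring_nf

lemma qt2_real {x : ℝ} (hx : 0 < x) (k : ℕ) :
    qt2 q k (x : ℂ)
      = ((-(Real.log q) ^ 2 * (q ^ (x + (k : ℝ)) / (1 - q ^ (x + (k : ℝ))) ^ 2) : ℝ) : ℂ) := by
  rw [qt2, qv_real hq0 hq1]
  push_cast
  ring_nf

lemma qS0_real {x : ℝ} (hx : 0 < x) :
    qS0 q (x : ℂ) = ((∑' k : ℕ, Real.log (1 - q ^ (x + (k : ℝ))) : ℝ) : ℂ) := by
  rw [qS0, Complex.ofReal_tsum]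
  exact tsum_congr fun k => qt0_real hq0 hq1 hx k

lemma qS1_real {x : ℝ} (hx : 0 < x) :
    qS1 q (x : ℂ)
      = ((∑' k : ℕ, -Real.log q * q ^ (x + (k : ℝ)) / (1 - q ^ (x + (k : ℝ))) : ℝ) : ℂ) := by
  rw [qS1, Complex.ofReal_tsum]
  exact tsum_congr fun k => qt1_real hq0 hq1 hx k

lemma qRsummable {x : ℝ} (hx : 0 < x) :
    Summable (fun k : ℕ => q ^ (x + (k : ℝ)) / (1 - q ^ (x + (k : ℝ))) ^ 2) := by
  have h1 : q ^ x < 1 := qrpow_lt_one hq0 hq1 hx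
  apply Summable.of_nonneg_of_le
    (fun k => by positivity)
    (fun k => ?_)
    ((qgeo hq0 hq1).mul_left (q ^ x / (1 - q ^ x) ^ 2))
  have hk1 : q ^ (x + (k : ℝ)) = q ^ x * q ^ k := by
    rw [Real.rpow_add hq0, Real.rpow_natCast]
  have hk2 : q ^ (x + (k : ℝ)) ≤ q ^ x := by
    rw [hk1]
    nlinarith [pow_le_one₀ hq0.le hq1.le (n := k), Real.rpow_pos_of_pos hq0 x,
      pow_pos hq0 k]
  have h2 : (1 - q ^ x) ^ 2 ≤ (1 - q ^ (x + (k : ℝ))) ^ 2 := by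
    apply pow_le_pow_left₀ (by linarith) (by linarith)
  calc q ^ (x + (k : ℝ)) / (1 - q ^ (x + (k : ℝ))) ^ 2
      ≤ q ^ (x + (k : ℝ)) / (1 - q ^ x) ^ 2 :=
        div_le_div_of_nonneg_left (qp_pos hq0 hq1 x k).le (by nlinarith) h2
    _ = q ^ x / (1 - q ^ x) ^ 2 * q ^ k := by rw [hk1]; ring

lemma qS2_real {x : ℝ} (hx : 0 < x) :
    qS2 q (x : ℂ)
      = ((-(Real.log q) ^ 2
          * ∑' k : ℕ, q ^ (x + (k : ℝ)) / (1 - q ^ (x + (k : ℝ))) ^ 2 : ℝ) : ℂ) := by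
  rw [qS2]
  rw [show ∀ y : ℝ, ((y:ℝ):ℂ) = ((y:ℝ):ℂ) from fun _ => rfl]
  rw [← tsum_mul_left, Complex.ofReal_tsum]
  exact tsum_congr fun k => qt2_real hq0 hq1 hx k

end prod
noncomputable def qG (q : ℝ) (w : ℂ) : ℂ :=
  (1 - w) * (Real.log (1 - q) : ℂ) + qS0 q 1 - qS0 q w

section ev
variable {q : ℝ} (hq0 : 0 < q) (hq1 : q < 1)
include hq0 hq1

lemma qS0_im_real {x : ℝ} (hx : 0 < x) : (qS0 q (x : ℂ)).im = 0 := by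
  rw [qS0_real hq0 hq1 hx, Complex.ofReal_im]

lemma ev_re_pos {x : ℝ} (hx : 0 < x) : ∀ᶠ w : ℂ in 𝓝 (x : ℂ), 0 < w.re := by
  have : {w : ℂ | 0 < w.re} ∈ 𝓝 (x : ℂ) :=
    (isOpen_lt continuous_const Complex.continuous_re).mem_nhds (by simpa using hx)
  exact this

lemma log_qPoch_ev {x : ℝ} (hx : 0 < x) :
    (fun w => Complex.log (qPoch ((q : ℂ) ^ w) (q : ℂ))) =ᶠ[𝓝 (x : ℂ)] qS0 q := by
  have hx' : (0:ℝ) < (Complex.ofReal x).re := by simpa using hx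
  have hcont : ContinuousAt (qS0 q) (x : ℂ) := (hasDerivAt_qS0 hq0 hq1 hx').continuousAt
  have him : Tendsto (fun w => (qS0 q w).im) (𝓝 (x : ℂ)) (𝓝 0) := by
    have := (Complex.continuous_im.continuousAt.comp hcont)
    simp only [Function.comp_def] at this
    rw [ContinuousAt] at this
    rwa [qS0_im_real hq0 hq1 hx] at this
  have h1 : ∀ᶠ w : ℂ in 𝓝 (x : ℂ), (qS0 q w).im ∈ Set.Ioo (-π) π :=
    him.eventually (Ioo_mem_nhds (by simpa using Real.pi_pos) Real.pi_pos)
  filter_upwards [h1, ev_re_pos hq0 hq1 hx] with w hw1 hw2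
  rw [qPoch_eq_exp hq0 hq1 hw2, Complex.log_exp hw1.1 hw1.2.le]

lemma qGamma_eq_exp {w : ℂ} (hw : 0 < w.re) : qGamma q w = Complex.exp (qG q w) := by
  have h1q : (0:ℝ) < 1 - q := by linarith
  have hc1 : ((1 : ℂ) - (q : ℂ)) ^ ((1:ℂ) - w)
      = Complex.exp ((1 - w) * (Real.log (1 - q) : ℂ)) := by
    have hne : ((1 : ℂ) - (q : ℂ)) ≠ 0 := by
      rw [show ((1:ℂ) - (q:ℂ)) = ((1 - q : ℝ) : ℂ) by push_cast; ring]
      exact_mod_cast h1q.ne'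
    rw [Complex.cpow_def_of_ne_zero hne, mul_comm]
    congr 1
    rw [show ((1:ℂ) - (q:ℂ)) = ((1 - q : ℝ) : ℂ) by push_cast; ring,
      ← Complex.ofReal_log h1q.le]
  have hc2 : qPoch (q : ℂ) (q : ℂ) = Complex.exp (qS0 q 1) := by
    have := qPoch_eq_exp hq0 hq1 (w := 1) (by norm_num)
    rwa [Complex.cpow_one] at this
  have hc3 : qPoch ((q : ℂ) ^ w) (q : ℂ) = Complex.exp (qS0 q w) := qPoch_eq_exp hq0 hq1 hw
  rw [qGamma, hc1, hc2, hc3, qG, ← Complex.exp_add, ← Complex.exp_sub]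

lemma qG_im_real {x : ℝ} (hx : 0 < x) : (qG q (x : ℂ)).im = 0 := by
  rw [qG, Complex.sub_im, Complex.add_im, qS0_im_real hq0 hq1 hx]
  have h1 : qS0 q 1 = qS0 q ((1:ℝ):ℂ) := by norm_num
  rw [h1, qS0_im_real hq0 hq1 one_pos]
  have : ((1:ℂ) - (x:ℂ)) * (Real.log (1 - q) : ℂ) = (((1 - x) * Real.log (1-q) : ℝ) : ℂ) := by
    push_cast; ring
  rw [this, Complex.ofReal_im]
  ring

lemma hasDerivAt_qG {w : ℂ} (hw : 0 < w.re) :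
    HasDerivAt (qG q) (-(Real.log (1 - q) : ℂ) - qS1 q w) w := by
  have h1 : HasDerivAt (fun w : ℂ => (1 - w) * (Real.log (1 - q) : ℂ) + qS0 q 1)
      (-(Real.log (1 - q) : ℂ)) w := by
    simpa using (((hasDerivAt_id w).const_sub 1).mul_const (Real.log (1 - q) : ℂ)).add_const
      (qS0 q 1)
  exact h1.sub (hasDerivAt_qS0 hq0 hq1 hw)

lemma log_qGamma_ev {x : ℝ} (hx : 0 < x) :
    (fun w => Complex.log (qGamma q w)) =ᶠ[𝓝 (x : ℂ)] qG q := by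
  have hx' : (0:ℝ) < (Complex.ofReal x).re := by simpa using hx
  have hcont : ContinuousAt (qG q) (x : ℂ) := (hasDerivAt_qG hq0 hq1 hx').continuousAt
  have him : Tendsto (fun w => (qG q w).im) (𝓝 (x : ℂ)) (𝓝 0) := by
    have := (Complex.continuous_im.continuousAt.comp hcont)
    simp only [Function.comp_def] at this
    rw [ContinuousAt] at this
    rwa [qG_im_real hq0 hq1 hx] at this
  have h1 : ∀ᶠ w : ℂ in 𝓝 (x : ℂ), (qG q w).im ∈ Set.Ioo (-π) π :=
    him.eventually (Ioo_mem_nhds (by simpa using Real.pi_pos) Real.pi_pos)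
  filter_upwards [h1, ev_re_pos hq0 hq1 hx] with w hw1 hw2
  rw [qGamma_eq_exp hq0 hq1 hw2, Complex.log_exp hw1.1 hw1.2.le]

lemma qDigamma_ev {x : ℝ} (hx : 0 < x) :
    qDigamma q =ᶠ[𝓝 (x : ℂ)] (fun w => -(Real.log (1 - q) : ℂ) - qS1 q w) := by
  have h := (log_qGamma_ev hq0 hq1 hx).eventually_nhds
  filter_upwards [h, ev_re_pos hq0 hq1 hx] with w hw1 hw2
  rw [qDigamma, Filter.EventuallyEq.deriv_eq hw1]
  exact (hasDerivAt_qG hq0 hq1 hw2).deriv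

lemma deriv_qDigamma_real {x : ℝ} (hx : 0 < x) :
    deriv (qDigamma q) (x : ℂ) = -qS2 q (x : ℂ) := by
  rw [Filter.EventuallyEq.deriv_eq (qDigamma_ev hq0 hq1 hx)]
  have hx' : (0:ℝ) < (Complex.ofReal x).re := by simpa using hx
  exact ((hasDerivAt_qS1 hq0 hq1 hx').const_sub (-(Real.log (1 - q) : ℂ))).deriv

end ev
theorem g0_second_deriv_at_A (q θ α : ℝ) (hq0 : 0 < q) (hq1 : q < 1) (hθ : 0 < θ)
    (hα0 : 0 < α) (hα : α < q ^ θ) :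
    iteratedDeriv 2 (g0 q θ α) ((Aq q α : ℝ) : ℂ)
        = deriv (qDigamma q) ((θ : ℝ) : ℂ) * (q : ℂ) ^ (((Aq q α : ℝ) : ℂ) - (θ : ℂ))
          - deriv (qDigamma q) ((Aq q α : ℝ) : ℂ)
    ∧ iteratedDeriv 2 (g0 q θ α) ((Aq q α : ℝ) : ℂ)
        = ((Real.log q ^ 2 * ∑' k : ℕ, q ^ (Aq q α + (k : ℝ)) *
            (1 / (1 - q ^ (θ + (k : ℝ))) ^ 2 - 1 / (1 - q ^ (Aq q α + (k : ℝ))) ^ 2) : ℝ) : ℂ)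
    ∧ 0 < Real.log q ^ 2 * ∑' k : ℕ, q ^ (Aq q α + (k : ℝ)) *
            (1 / (1 - q ^ (θ + (k : ℝ))) ^ 2 - 1 / (1 - q ^ (Aq q α + (k : ℝ))) ^ 2) := by
  set A : ℝ := Aq q α with hAdef
  have hL : Real.log q < 0 := Real.log_neg hq0 hq1
  have hLne : Real.log q ≠ 0 := hL.ne
  have hθA : θ < A := by
    rw [hAdef, Aq, lt_div_iff_of_neg hL]
    calc Real.log α < Real.log (q ^ θ) := Real.log_lt_log hα0 hα
      _ = θ * Real.log q := Real.log_rpow hq0 θ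
  have hA0 : 0 < A := lt_trans hθ hθA
  have hAre : (0:ℝ) < ((A : ℝ) : ℂ).re := by simpa using hA0
  have hθre : (0:ℝ) < ((θ : ℝ) : ℂ).re := by simpa using hθ
  -- derivative of w ↦ q^w
  have hLcne : ((Real.log q : ℝ) : ℂ) ≠ 0 := by exact_mod_cast hLne
  have hcpowD : ∀ w : ℂ, HasDerivAt (fun w : ℂ => (q : ℂ) ^ w)
      ((Real.log q : ℂ) * (q : ℂ) ^ w) w := by
    intro w
    have h : HasDerivAt (fun w : ℂ => w * (Real.log q : ℂ)) (Real.log q : ℂ) w := by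
      simpa using (hasDerivAt_id w).mul_const ((Real.log q : ℝ) : ℂ)
    have h2 := h.cexp
    have hfun : (fun w : ℂ => Complex.exp (w * (Real.log q : ℂ))) = fun w => (q : ℂ) ^ w := by
      ext z; rw [qcpow hq0]
    rw [hfun, ← qcpow hq0] at h2
    refine h2.congr_deriv ?_
    ring
  -- the locally-matching smooth function
  set c1 : ℂ := -gC q θ α * (Real.log q : ℂ) with hc1
  set κ : ℂ := kappaC q θ with hκ
  set H1 : ℂ → ℂ := fun w => c1 + κ * (Real.log q : ℂ) * (q : ℂ) ^ w + qS1 q w with hH1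
  have hg0H : g0 q θ α =ᶠ[𝓝 ((A : ℝ) : ℂ)]
      (fun w => c1 * w + κ * (q : ℂ) ^ w + qS0 q w) := by
    filter_upwards [log_qPoch_ev hq0 hq1 hA0] with w hw
    rw [g0, hw]
  have hHD : ∀ w : ℂ, 0 < w.re →
      HasDerivAt (fun w => c1 * w + κ * (q : ℂ) ^ w + qS0 q w) (H1 w) w := by
    intro w hw
    have h := (((hasDerivAt_id w).const_mul c1).add ((hcpowD w).const_mul κ)).add
      (hasDerivAt_qS0 hq0 hq1 hw)
    refine h.congr_deriv ?_
    rw [hH1]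
    ring
  have hD1ev : deriv (g0 q θ α) =ᶠ[𝓝 ((A : ℝ) : ℂ)] H1 := by
    filter_upwards [hg0H.eventually_nhds, ev_re_pos hq0 hq1 hA0] with w hw1 hw2
    rw [Filter.EventuallyEq.deriv_eq hw1]
    exact (hHD w hw2).deriv
  have hH1D : HasDerivAt H1 (κ * (Real.log q : ℂ) ^ 2 * (q : ℂ) ^ ((A : ℝ) : ℂ)
      + qS2 q ((A : ℝ) : ℂ)) ((A : ℝ) : ℂ) := by
    have h := ((hcpowD ((A : ℝ) : ℂ)).const_mul (κ * (Real.log q : ℂ))).const_add c1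
    have h2 := h.add (hasDerivAt_qS1 hq0 hq1 hAre)
    refine h2.congr_deriv ?_
    ring
  have key : iteratedDeriv 2 (g0 q θ α) ((A : ℝ) : ℂ)
      = κ * (Real.log q : ℂ) ^ 2 * (q : ℂ) ^ ((A : ℝ) : ℂ) + qS2 q ((A : ℝ) : ℂ) := by
    rw [show (2:ℕ) = 1 + 1 from rfl, iteratedDeriv_succ, iteratedDeriv_one]
    rw [Filter.EventuallyEq.deriv_eq hD1ev]
    exact hH1D.deriv
  have hdθ : deriv (qDigamma q) ((θ : ℝ) : ℂ) = -qS2 q ((θ : ℝ) : ℂ) :=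
    deriv_qDigamma_real hq0 hq1 hθ
  have hdA : deriv (qDigamma q) ((A : ℝ) : ℂ) = -qS2 q ((A : ℝ) : ℂ) :=
    deriv_qDigamma_real hq0 hq1 hA0
  have hqθne : (q : ℂ) ^ ((θ : ℝ) : ℂ) ≠ 0 := by
    rw [qcpow hq0]; exact Complex.exp_ne_zero _
  have hκval : κ = -qS2 q ((θ : ℝ) : ℂ) / ((Real.log q : ℂ) ^ 2 * (q : ℂ) ^ ((θ : ℝ) : ℂ)) := by
    rw [hκ, kappaC, hdθ]
  have hsub : (q : ℂ) ^ (((A : ℝ) : ℂ) - ((θ : ℝ) : ℂ))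
      = (q : ℂ) ^ ((A : ℝ) : ℂ) / (q : ℂ) ^ ((θ : ℝ) : ℂ) :=
    Complex.cpow_sub _ _ (by exact_mod_cast hq0.ne')
  -- first conjunct
  have first : iteratedDeriv 2 (g0 q θ α) ((A : ℝ) : ℂ)
      = deriv (qDigamma q) ((θ : ℝ) : ℂ) * (q : ℂ) ^ (((A : ℝ) : ℂ) - ((θ : ℝ) : ℂ))
        - deriv (qDigamma q) ((A : ℝ) : ℂ) := by
    rw [key, hdθ, hdA, hsub, hκval]
    field_simp
    ring
  -- real-series facts
  have hterm : ∀ k : ℕ, q ^ (A + (k:ℝ)) * (1/(1 - q^(θ+(k:ℝ)))^2 - 1/(1 - q^(A+(k:ℝ)))^2)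
      = q^(A-θ) * (q^(θ+(k:ℝ))/(1 - q^(θ+(k:ℝ)))^2) - q^(A+(k:ℝ))/(1 - q^(A+(k:ℝ)))^2 := by
    intro k
    have h1 : q^(A+(k:ℝ)) = q^(A-θ) * q^(θ+(k:ℝ)) := by
      rw [← Real.rpow_add hq0]
      ring_nf
    calc q ^ (A + (k:ℝ)) * (1/(1 - q^(θ+(k:ℝ)))^2 - 1/(1 - q^(A+(k:ℝ)))^2)
        = q^(A+(k:ℝ))/(1 - q^(θ+(k:ℝ)))^2 - q^(A+(k:ℝ))/(1 - q^(A+(k:ℝ)))^2 := by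
          rw [mul_sub, mul_one_div, mul_one_div]
      _ = _ := by rw [h1, mul_div_assoc]
  have hsumθ : Summable (fun k : ℕ => q^(A-θ) * (q^(θ+(k:ℝ))/(1 - q^(θ+(k:ℝ)))^2)) :=
    (qRsummable hq0 hq1 hθ).mul_left _
  have hsumA : Summable (fun k : ℕ => q^(A+(k:ℝ))/(1 - q^(A+(k:ℝ)))^2) :=
    qRsummable hq0 hq1 hA0
  have hsumT : Summable (fun k : ℕ => q ^ (A + (k:ℝ)) *
      (1/(1 - q^(θ+(k:ℝ)))^2 - 1/(1 - q^(A+(k:ℝ)))^2)) :=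
    (hsumθ.sub hsumA).congr (fun k => (hterm k).symm)
  have hT : (∑' k : ℕ, q ^ (A + (k:ℝ)) *
        (1/(1 - q^(θ+(k:ℝ)))^2 - 1/(1 - q^(A+(k:ℝ)))^2))
      = q^(A-θ) * (∑' k : ℕ, q^(θ+(k:ℝ))/(1 - q^(θ+(k:ℝ)))^2)
        - ∑' k : ℕ, q^(A+(k:ℝ))/(1 - q^(A+(k:ℝ)))^2 := by
    rw [tsum_congr hterm, Summable.tsum_sub hsumθ hsumA, tsum_mul_left]
  have hsub2 : (q : ℂ) ^ (((A : ℝ) : ℂ) - ((θ : ℝ) : ℂ)) = (((q ^ (A - θ) : ℝ)) : ℂ) := by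
    rw [show ((A : ℝ) : ℂ) - ((θ : ℝ) : ℂ) = (((A - θ : ℝ) : ℝ) : ℂ) by push_cast; ring,
      ← Complex.ofReal_cpow hq0.le]
  have hpos : ∀ k : ℕ, 0 < q ^ (A + (k:ℝ)) *
      (1/(1 - q^(θ+(k:ℝ)))^2 - 1/(1 - q^(A+(k:ℝ)))^2) := by
    intro k
    have hq1θ : q^(θ+(k:ℝ)) < 1 := qp_lt_one hq0 hq1 hθ k
    have hpθ : 0 < q^(θ+(k:ℝ)) := qp_pos hq0 hq1 θ k
    have hpA : 0 < q^(A+(k:ℝ)) := qp_pos hq0 hq1 A k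
    have hlt : q^(A+(k:ℝ)) < q^(θ+(k:ℝ)) :=
      Real.rpow_lt_rpow_of_exponent_gt hq0 hq1 (by linarith)
    have h1 : 0 < 1 - q^(θ+(k:ℝ)) := by linarith
    have h2 : 1 - q^(θ+(k:ℝ)) < 1 - q^(A+(k:ℝ)) := by linarith
    have h3 : (1 - q^(θ+(k:ℝ)))^2 < (1 - q^(A+(k:ℝ)))^2 := by nlinarith
    have h4 := one_div_lt_one_div_of_lt (by positivity) h3
    exact mul_pos hpA (by linarith)
  refine ⟨first, ?_, ?_⟩
  · rw [first, hdθ, hdA, hsub2, qS2_real hq0 hq1 hθ, qS2_real hq0 hq1 hA0, hT]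
    push_cast
    ring
  · have hTpos : 0 < ∑' k : ℕ, q ^ (A + (k:ℝ)) *
        (1/(1 - q^(θ+(k:ℝ)))^2 - 1/(1 - q^(A+(k:ℝ)))^2) :=
      Summable.tsum_pos hsumT (fun k => (hpos k).le) 0 (hpos 0)
    have hL2 : 0 < Real.log q ^ 2 := by nlinarith
    exact mul_pos hL2 hTpos
end

section
/- Fix 0 < q < 1, θ > 0 and α with 0 < α < q^θ. Then f(q,θ) - g(q,θ) > 0, where f = Ψ'_q(θ)/(log q)^2 - Ψ_q(θ)/log q - log(1-q)/log q and g = (Ψ'_q(θ)/(log q)^2)(α/q^θ) - Ψ_q(log_q α)/log q - log(1-q)/log q. -/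
set_option linter.unusedSectionVars false
set_option linter.unusedVariables false
set_option maxHeartbeats 1000000


open Complex Real

namespace QDG

variable (q : ℝ)

noncomputable def S0 (w : ℂ) : ℂ := ∑' k : ℕ, Complex.log (1 - (q:ℂ) ^ w * (q:ℂ) ^ (k:ℕ))

noncomputable def S1 (w : ℂ) : ℂ :=
  ∑' k : ℕ, -((Real.log q : ℂ) * ((q:ℂ) ^ w * (q:ℂ) ^ (k:ℕ))) / (1 - (q:ℂ) ^ w * (q:ℂ) ^ (k:ℕ))

noncomputable def S2 (w : ℂ) : ℂ :=
  ∑' k : ℕ, -((Real.log q : ℂ)^2 * ((q:ℂ) ^ w * (q:ℂ) ^ (k:ℕ))) / (1 - (q:ℂ) ^ w * (q:ℂ) ^ (k:ℕ))^2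

noncomputable def Gq (w : ℂ) : ℂ :=
  (1 - w) * (Real.log (1 - q) : ℂ) + Complex.log (qPoch q q) - S0 q w

variable {q} (hq0 : 0 < q) (hq1 : q < 1)
include hq0 hq1

lemma norm_u (w : ℂ) (k : ℕ) : ‖(q:ℂ) ^ w * (q:ℂ) ^ (k:ℕ)‖ = q ^ w.re * q ^ (k:ℕ) := by
  rw [norm_mul, Complex.norm_cpow_eq_rpow_re_of_pos hq0,
    norm_pow, Complex.norm_real, Real.norm_eq_abs, abs_of_pos hq0]

lemma u_lt_one {w : ℂ} (hw : 0 < w.re) (k : ℕ) : q ^ w.re * q ^ (k:ℕ) < 1 := by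
  have h1 : q ^ w.re < 1 := Real.rpow_lt_one hq0.le hq1 hw
  have h2 : q ^ (k:ℕ) ≤ 1 := pow_le_one₀ hq0.le hq1.le
  nlinarith [Real.rpow_pos_of_pos hq0 w.re, pow_pos hq0 k]

lemma re_one_sub_u {w : ℂ} (hw : 0 < w.re) (k : ℕ) :
    0 < (1 - (q:ℂ) ^ w * (q:ℂ) ^ (k:ℕ)).re := by
  have h := u_lt_one hq0 hq1 hw k
  have hre : |((q:ℂ) ^ w * (q:ℂ) ^ (k:ℕ)).re| ≤ q ^ w.re * q ^ (k:ℕ) := by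
    rw [← norm_u hq0 hq1 w k]; exact Complex.abs_re_le_norm _
  have := abs_le.mp hre
  simp only [Complex.sub_re, Complex.one_re]
  linarith [this.2]

lemma one_sub_u_ne {w : ℂ} (hw : 0 < w.re) (k : ℕ) :
    (1 : ℂ) - (q:ℂ) ^ w * (q:ℂ) ^ (k:ℕ) ≠ 0 := by
  intro h
  have := re_one_sub_u hq0 hq1 hw k
  rw [h] at this; simp at this

lemma norm_one_sub_u {w : ℂ} (hw : 0 < w.re) (k : ℕ) :
    1 - q ^ w.re * q ^ (k:ℕ) ≤ ‖(1:ℂ) - (q:ℂ) ^ w * (q:ℂ) ^ (k:ℕ)‖ := by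
  have := norm_sub_norm_le (1:ℂ) ((q:ℂ) ^ w * (q:ℂ) ^ (k:ℕ))
  rw [norm_one, norm_u hq0 hq1] at this
  exact this

lemma hasDerivAt_logterm {w : ℂ} (hw : 0 < w.re) (k : ℕ) :
    HasDerivAt (fun v => Complex.log (1 - (q:ℂ) ^ v * (q:ℂ) ^ (k:ℕ)))
      (-((Real.log q : ℂ) * ((q:ℂ) ^ w * (q:ℂ) ^ (k:ℕ))) / (1 - (q:ℂ) ^ w * (q:ℂ) ^ (k:ℕ))) w := by
  have hqC : (q:ℂ) ≠ 0 := by exact_mod_cast hq0.ne'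
  have h1 : HasDerivAt (fun v : ℂ => (q:ℂ) ^ v) ((q:ℂ) ^ w * Complex.log q) w :=
    (hasStrictDerivAt_const_cpow (Or.inl hqC)).hasDerivAt
  have h2 : HasDerivAt (fun v : ℂ => (1:ℂ) - (q:ℂ) ^ v * (q:ℂ) ^ (k:ℕ))
      (-((q:ℂ) ^ w * Complex.log q * (q:ℂ) ^ (k:ℕ))) w := (h1.mul_const _).const_sub 1
  have h3 := h2.clog (by
    rw [Complex.mem_slitPlane_iff]
    exact Or.inl (re_one_sub_u hq0 hq1 hw k))
  convert h3 using 1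
  rw [← Complex.ofReal_log hq0.le]
  ring_nf



lemma summable_geom_aux (c : ℝ) : Summable (fun k : ℕ => c * q ^ (k:ℕ)) :=
  (summable_geometric_of_lt_one hq0.le hq1).mul_left c

lemma summable_logterm {w : ℂ} (hw : 0 < w.re) :
    Summable (fun k : ℕ => Complex.log (1 - (q:ℂ) ^ w * (q:ℂ) ^ (k:ℕ))) := by
  set r := q ^ w.re with hr
  have hr0 : 0 < r := Real.rpow_pos_of_pos hq0 _
  have hr1 : r < 1 := Real.rpow_lt_one hq0.le hq1 hw
  apply Summable.of_norm_bounded (g := fun k : ℕ => (r * (1 - r)⁻¹ / 2 + 1) * (r * q ^ (k:ℕ)))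
    ((summable_geom_aux hq0 hq1 _).mul_left _)
  intro k
  have hnorm : ‖-((q:ℂ) ^ w * (q:ℂ) ^ (k:ℕ))‖ = r * q ^ (k:ℕ) := by
    rw [norm_neg, norm_u hq0 hq1]
  have hlt : ‖-((q:ℂ) ^ w * (q:ℂ) ^ (k:ℕ))‖ < 1 := by
    rw [hnorm]; exact u_lt_one hq0 hq1 hw k
  have hb := Complex.norm_log_one_add_le hlt
  have h1 : (1 : ℂ) - (q:ℂ) ^ w * (q:ℂ) ^ (k:ℕ) = 1 + -((q:ℂ) ^ w * (q:ℂ) ^ (k:ℕ)) := by ring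
  rw [h1]
  refine hb.trans ?_
  rw [hnorm]
  have hk1 : q ^ (k:ℕ) ≤ 1 := pow_le_one₀ hq0.le hq1.le
  have hk0 : (0:ℝ) < q ^ (k:ℕ) := pow_pos hq0 k
  have hle : r * q ^ (k:ℕ) ≤ r := by nlinarith
  have hinv : (1 - r * q ^ (k:ℕ))⁻¹ ≤ (1 - r)⁻¹ := by
    apply inv_anti₀ <;> nlinarith
  have h0 : (0:ℝ) ≤ r * q ^ (k:ℕ) := by positivity
  have h1r : (0:ℝ) ≤ (1-r)⁻¹ := by
    rw [inv_nonneg]; linarith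
  calc (r * q ^ (k:ℕ)) ^ 2 * (1 - r * q ^ (k:ℕ))⁻¹ / 2 + r * q ^ (k:ℕ)
      ≤ (r * q ^ (k:ℕ)) * r * (1-r)⁻¹ / 2 + r * q ^ (k:ℕ) := by
        have : (r * q ^ (k:ℕ)) ^ 2 * (1 - r * q ^ (k:ℕ))⁻¹ ≤ (r * q ^ (k:ℕ)) * r * (1-r)⁻¹ := by
          rw [sq]
          apply mul_le_mul _ hinv _ _
          · nlinarith
          · rw [inv_nonneg]; nlinarith
          · positivity
        linarith
    _ = (r * (1 - r)⁻¹ / 2 + 1) * (r * q ^ (k:ℕ)) := by ring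

lemma summable_S1term {w : ℂ} (hw : 0 < w.re) :
    Summable (fun k : ℕ =>
      -((Real.log q : ℂ) * ((q:ℂ) ^ w * (q:ℂ) ^ (k:ℕ))) / (1 - (q:ℂ) ^ w * (q:ℂ) ^ (k:ℕ))) := by
  set r := q ^ w.re with hr
  have hr0 : 0 < r := Real.rpow_pos_of_pos hq0 _
  have hr1 : r < 1 := Real.rpow_lt_one hq0.le hq1 hw
  apply Summable.of_norm_bounded (g := fun k : ℕ => (|Real.log q| * (1 - r)⁻¹ * r) * q ^ (k:ℕ))
    ((summable_geometric_of_lt_one hq0.le hq1).mul_left _)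
  intro k
  have hk1 : q ^ (k:ℕ) ≤ 1 := pow_le_one₀ hq0.le hq1.le
  have hk0 : (0:ℝ) < q ^ (k:ℕ) := pow_pos hq0 k
  have hden : 1 - r ≤ ‖(1:ℂ) - (q:ℂ) ^ w * (q:ℂ) ^ (k:ℕ)‖ := by
    refine le_trans (by nlinarith) (norm_one_sub_u hq0 hq1 hw k)
  have hden0 : (0:ℝ) < 1 - r := by linarith
  rw [norm_div, norm_neg, norm_mul, norm_u hq0 hq1, Complex.norm_real, Real.norm_eq_abs]
  rw [div_le_iff₀ (lt_of_lt_of_le hden0 hden)]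
  calc |Real.log q| * (r * q ^ (k:ℕ))
      = (|Real.log q| * (1 - r)⁻¹ * r * q ^ (k:ℕ)) * (1 - r) := by
        field_simp
    _ ≤ (|Real.log q| * (1 - r)⁻¹ * r) * q ^ (k:ℕ) * ‖(1:ℂ) - (q:ℂ) ^ w * (q:ℂ) ^ (k:ℕ)‖ := by
        apply mul_le_mul_of_nonneg_left hden
        positivity
lemma u_le {ε : ℝ} (hε : 0 < ε) {v : ℂ} (hv : ε ≤ v.re) (k : ℕ) :
    ‖(q:ℂ) ^ v * (q:ℂ) ^ (k:ℕ)‖ ≤ q ^ ε * q ^ (k:ℕ) := by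
  rw [norm_u hq0 hq1]
  have : q ^ v.re ≤ q ^ ε := Real.rpow_le_rpow_of_exponent_ge hq0 hq1.le hv
  nlinarith [pow_pos hq0 k]

lemma one_sub_u_ge {ε : ℝ} (hε : 0 < ε) {v : ℂ} (hv : ε ≤ v.re) (k : ℕ) :
    1 - q ^ ε ≤ ‖(1:ℂ) - (q:ℂ) ^ v * (q:ℂ) ^ (k:ℕ)‖ := by
  have h2 := norm_one_sub_u hq0 hq1 (lt_of_lt_of_le hε hv) k
  have h3 := u_le hq0 hq1 hε hv k
  rw [norm_u hq0 hq1] at h3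
  have hk1 : q ^ (k:ℕ) ≤ 1 := pow_le_one₀ hq0.le hq1.le
  have : q ^ ε * q ^ (k:ℕ) ≤ q ^ ε := by nlinarith [Real.rpow_pos_of_pos hq0 ε]
  linarith

lemma norm_S1term_le {ε : ℝ} (hε : 0 < ε) {v : ℂ} (hv : ε ≤ v.re) (k : ℕ) :
    ‖-((Real.log q : ℂ) * ((q:ℂ) ^ v * (q:ℂ) ^ (k:ℕ))) / (1 - (q:ℂ) ^ v * (q:ℂ) ^ (k:ℕ))‖
      ≤ (|Real.log q| * (1 - q ^ ε)⁻¹ * q ^ ε) * q ^ (k:ℕ) := by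
  have hre : (0:ℝ) < q ^ ε := Real.rpow_pos_of_pos hq0 _
  have hre1 : q ^ ε < 1 := Real.rpow_lt_one hq0.le hq1 hε
  have hden := one_sub_u_ge hq0 hq1 hε hv k
  have hnum := u_le hq0 hq1 hε hv k
  have hden0 : (0:ℝ) < 1 - q ^ ε := by linarith
  rw [norm_div, norm_neg, norm_mul, Complex.norm_real (Real.log q), Real.norm_eq_abs,
    div_le_iff₀ (lt_of_lt_of_le hden0 hden)]
  have hq2 : (0:ℝ) ≤ |Real.log q| := abs_nonneg _
  calc |Real.log q| * ‖(q:ℂ) ^ v * (q:ℂ) ^ (k:ℕ)‖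
      ≤ |Real.log q| * (q ^ ε * q ^ (k:ℕ)) := by nlinarith
    _ = (|Real.log q| * (1 - q ^ ε)⁻¹ * q ^ ε) * q ^ (k:ℕ) * (1 - q ^ ε) := by field_simp
    _ ≤ (|Real.log q| * (1 - q ^ ε)⁻¹ * q ^ ε) * q ^ (k:ℕ) *
          ‖(1:ℂ) - (q:ℂ) ^ v * (q:ℂ) ^ (k:ℕ)‖ := by
        apply mul_le_mul_of_nonneg_left hden
        positivity

lemma norm_S2term_le {ε : ℝ} (hε : 0 < ε) {v : ℂ} (hv : ε ≤ v.re) (k : ℕ) :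
    ‖-((Real.log q : ℂ)^2 * ((q:ℂ) ^ v * (q:ℂ) ^ (k:ℕ))) / (1 - (q:ℂ) ^ v * (q:ℂ) ^ (k:ℕ))^2‖
      ≤ ((Real.log q)^2 * ((1 - q ^ ε)^2)⁻¹ * q ^ ε) * q ^ (k:ℕ) := by
  have hre : (0:ℝ) < q ^ ε := Real.rpow_pos_of_pos hq0 _
  have hre1 : q ^ ε < 1 := Real.rpow_lt_one hq0.le hq1 hε
  have hden := one_sub_u_ge hq0 hq1 hε hv k
  have hnum := u_le hq0 hq1 hε hv k
  have hden0 : (0:ℝ) < 1 - q ^ ε := by linarith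
  have hden2 : (1 - q ^ ε)^2 ≤ ‖((1:ℂ) - (q:ℂ) ^ v * (q:ℂ) ^ (k:ℕ))^2‖ := by
    rw [norm_pow]
    apply pow_le_pow_left₀ hden0.le hden
  rw [norm_div, norm_neg, norm_mul, norm_pow, Complex.norm_real (Real.log q),
    Real.norm_eq_abs, div_le_iff₀ (lt_of_lt_of_le (by positivity) hden2), ← _root_.sq_abs (Real.log q)]
  have hq2 : (0:ℝ) ≤ |Real.log q| := abs_nonneg _
  calc |Real.log q|^2 * ‖(q:ℂ) ^ v * (q:ℂ) ^ (k:ℕ)‖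
      ≤ |Real.log q|^2 * (q ^ ε * q ^ (k:ℕ)) := by nlinarith
    _ = (|Real.log q|^2 * ((1 - q ^ ε)^2)⁻¹ * q ^ ε) * q ^ (k:ℕ) * (1 - q ^ ε)^2 := by
        field_simp
    _ ≤ (|Real.log q|^2 * ((1 - q ^ ε)^2)⁻¹ * q ^ ε) * q ^ (k:ℕ) *
          ‖((1:ℂ) - (q:ℂ) ^ v * (q:ℂ) ^ (k:ℕ))^2‖ := by
        apply mul_le_mul_of_nonneg_left hden2
        positivity

lemma hasDerivAt_S1term {w : ℂ} (hw : 0 < w.re) (k : ℕ) :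
    HasDerivAt (fun v => -((Real.log q : ℂ) * ((q:ℂ) ^ v * (q:ℂ) ^ (k:ℕ))) / (1 - (q:ℂ) ^ v * (q:ℂ) ^ (k:ℕ)))
      (-((Real.log q : ℂ)^2 * ((q:ℂ) ^ w * (q:ℂ) ^ (k:ℕ))) / (1 - (q:ℂ) ^ w * (q:ℂ) ^ (k:ℕ))^2) w := by
  have hqC : (q:ℂ) ≠ 0 := by exact_mod_cast hq0.ne'
  have h1 : HasDerivAt (fun v : ℂ => (q:ℂ) ^ v) ((q:ℂ) ^ w * Complex.log q) w :=
    (hasStrictDerivAt_const_cpow (Or.inl hqC)).hasDerivAt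
  have hnum : HasDerivAt (fun v => -((Real.log q : ℂ) * ((q:ℂ) ^ v * (q:ℂ) ^ (k:ℕ))))
      (-((Real.log q : ℂ) * ((q:ℂ) ^ w * Complex.log q * (q:ℂ) ^ (k:ℕ)))) w :=
    (((h1.mul_const ((q:ℂ) ^ (k:ℕ))).const_mul ((Real.log q : ℂ))).neg)
  have hden : HasDerivAt (fun v : ℂ => (1:ℂ) - (q:ℂ) ^ v * (q:ℂ) ^ (k:ℕ))
      (-((q:ℂ) ^ w * Complex.log q * (q:ℂ) ^ (k:ℕ))) w := (h1.mul_const _).const_sub 1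
  have hne := one_sub_u_ne hq0 hq1 hw k
  have h := hnum.div hden hne
  refine h.congr_deriv ?_
  rw [← Complex.ofReal_log hq0.le]
  field_simp
  ring
lemma hasDerivAt_S0 {w : ℂ} (hw : 0 < w.re) : HasDerivAt (S0 q) (S1 q w) w := by
  set ε := w.re / 2 with hε
  have hε0 : 0 < ε := by positivity
  have honteps : ∀ v : ℂ, v ∈ {v : ℂ | ε < v.re} → 0 < v.re := fun v hv => lt_trans hε0 hv
  refine hasDerivAt_tsum_of_isPreconnected
    (u := fun k : ℕ => (|Real.log q| * (1 - q ^ ε)⁻¹ * q ^ ε) * q ^ (k:ℕ))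
    (t := {v : ℂ | ε < v.re}) (y₀ := w)
    ((summable_geometric_of_lt_one hq0.le hq1).mul_left _)
    (isOpen_lt continuous_const Complex.continuous_re)
    (convex_halfSpace_re_gt ε).isPreconnected
    (fun k v hv => hasDerivAt_logterm hq0 hq1 (honteps v hv) k)
    (fun k v hv => norm_S1term_le hq0 hq1 hε0 (le_of_lt hv) k)
    ?_ (summable_logterm hq0 hq1 hw) ?_
  · simp only [Set.mem_setOf_eq, hε]; linarith
  · simp only [Set.mem_setOf_eq, hε]; linarith

lemma hasDerivAt_S1 {w : ℂ} (hw : 0 < w.re) : HasDerivAt (S1 q) (S2 q w) w := by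
  set ε := w.re / 2 with hε
  have hε0 : 0 < ε := by positivity
  have honteps : ∀ v : ℂ, v ∈ {v : ℂ | ε < v.re} → 0 < v.re := fun v hv => lt_trans hε0 hv
  refine hasDerivAt_tsum_of_isPreconnected
    (u := fun k : ℕ => ((Real.log q)^2 * ((1 - q ^ ε)^2)⁻¹ * q ^ ε) * q ^ (k:ℕ))
    (t := {v : ℂ | ε < v.re}) (y₀ := w)
    ((summable_geometric_of_lt_one hq0.le hq1).mul_left _)
    (isOpen_lt continuous_const Complex.continuous_re)
    (convex_halfSpace_re_gt ε).isPreconnected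
    (fun k v hv => hasDerivAt_S1term hq0 hq1 (honteps v hv) k)
    (fun k v hv => norm_S2term_le hq0 hq1 hε0 (le_of_lt hv) k)
    ?_ (summable_S1term hq0 hq1 hw) ?_
  · simp only [Set.mem_setOf_eq, hε]; linarith
  · simp only [Set.mem_setOf_eq, hε]; linarith

lemma exp_S0 {w : ℂ} (hw : 0 < w.re) : Complex.exp (S0 q w) = qPoch ((q:ℂ) ^ w) q := by
  exact Complex.cexp_tsum_eq_tprod (f := fun k => 1 - (q:ℂ) ^ w * (q:ℂ) ^ (k:ℕ))
    (fun k => one_sub_u_ne hq0 hq1 hw k)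
    (summable_logterm hq0 hq1 hw)

lemma qPoch_qq_eq : qPoch (q:ℂ) (q:ℂ) = Complex.exp (S0 q 1) := by
  have h := exp_S0 hq0 hq1 (w := 1) (by norm_num)
  rw [Complex.cpow_one] at h
  exact h.symm

lemma qPoch_qq_ne : qPoch (q:ℂ) (q:ℂ) ≠ 0 := by
  rw [qPoch_qq_eq hq0 hq1]; exact Complex.exp_ne_zero _

lemma exp_Gq {w : ℂ} (hw : 0 < w.re) : Complex.exp (Gq q w) = qGamma q w := by
  have h1q : (0:ℝ) < 1 - q := by linarith
  have h1qC : (1 - (q:ℝ) : ℂ) ≠ 0 := by exact_mod_cast h1q.ne'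
  rw [Gq, Complex.exp_sub, Complex.exp_add, exp_S0 hq0 hq1 hw,
    Complex.exp_log (qPoch_qq_ne hq0 hq1), qGamma]
  congr 2
  rw [Complex.cpow_def_of_ne_zero (by push_cast; exact h1qC)]
  congr 1
  rw [show ((1:ℂ) - (q:ℂ)) = ((1 - q : ℝ) : ℂ) by push_cast; ring, ← Complex.ofReal_log h1q.le]
  ring

lemma S0_real {t : ℝ} (ht : 0 < t) :
    S0 q (t:ℂ) = ((∑' k : ℕ, Real.log (1 - q ^ t * q ^ (k:ℕ)) : ℝ) : ℂ) := by
  rw [Complex.ofReal_tsum]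
  apply tsum_congr
  intro k
  have h1 : ((q:ℂ)) ^ (t:ℂ) * (q:ℂ) ^ (k:ℕ) = ((q ^ t * q ^ (k:ℕ) : ℝ) : ℂ) := by
    rw [← Complex.ofReal_cpow hq0.le]
    push_cast
    ring
  have h2 : (0:ℝ) ≤ 1 - q ^ t * q ^ (k:ℕ) := by
    have := u_lt_one hq0 hq1 (w := (t:ℂ)) (by simpa using ht) k
    simp only [Complex.ofReal_re] at this
    linarith
  rw [h1, Complex.ofReal_log h2]
  push_cast
  ring_nf
lemma hasDerivAt_Gq {w : ℂ} (hw : 0 < w.re) :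
    HasDerivAt (Gq q) (-((Real.log (1 - q) : ℂ)) - S1 q w) w := by
  have h1 : HasDerivAt (fun v : ℂ => (1 - v) * ((Real.log (1 - q) : ℝ) : ℂ)
        + Complex.log (qPoch q q))
      ((-1) * ((Real.log (1 - q) : ℝ) : ℂ)) w :=
    (((hasDerivAt_id w).const_sub 1).mul_const _).add_const _
  have h := h1.sub (hasDerivAt_S0 hq0 hq1 hw)
  refine h.congr_deriv ?_
  ring

lemma Gq_real {t : ℝ} (ht : 0 < t) :
    Gq q (t:ℂ) = (((1 - t) * Real.log (1 - q)
      + (∑' k : ℕ, Real.log (1 - q ^ (1:ℝ) * q ^ (k:ℕ)))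
      - ∑' k : ℕ, Real.log (1 - q ^ t * q ^ (k:ℕ)) : ℝ) : ℂ) := by
  have h1 : Complex.log (qPoch (q:ℂ) (q:ℂ))
      = ((∑' k : ℕ, Real.log (1 - q ^ (1:ℝ) * q ^ (k:ℕ)) : ℝ) : ℂ) := by
    rw [qPoch_qq_eq hq0 hq1, show (1:ℂ) = ((1:ℝ):ℂ) by norm_num, S0_real hq0 hq1 one_pos,
      Complex.log_exp] <;> simp [Real.pi_pos, Real.pi_pos.le]
  rw [Gq, h1, S0_real hq0 hq1 ht]
  push_cast
  ring

lemma re_pos_eventually {t : ℝ} (ht : 0 < t) : ∀ᶠ w : ℂ in nhds (t:ℂ), 0 < w.re := by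
  have h : Filter.Tendsto Complex.re (nhds (t:ℂ)) (nhds t) := by
    simpa [ContinuousAt] using Complex.continuous_re.continuousAt (x := (t:ℂ))
  exact h.eventually (eventually_gt_nhds ht)

lemma log_qGamma_eventually {t : ℝ} (ht : 0 < t) :
    (fun w => Complex.log (qGamma q w)) =ᶠ[nhds (t:ℂ)] Gq q := by
  have hG := hasDerivAt_Gq hq0 hq1 (w := (t:ℂ)) (by simpa using ht)
  have hcont : ContinuousAt (Gq q) (t:ℂ) := hG.continuousAt
  have h0 : (Gq q (t:ℂ)).im = 0 := by rw [Gq_real hq0 hq1 ht]; simp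
  have him : Filter.Tendsto (fun w => (Gq q w).im) (nhds (t:ℂ)) (nhds 0) := by
    rw [← h0]
    exact (Complex.continuous_im.continuousAt.comp hcont)
  have h1 : ∀ᶠ w : ℂ in nhds (t:ℂ), (Gq q w).im ∈ Set.Ioo (-π) π :=
    him.eventually (Ioo_mem_nhds (by simpa using Real.pi_pos) Real.pi_pos)
  filter_upwards [h1, re_pos_eventually hq0 hq1 ht] with w hw1 hw2
  rw [← exp_Gq hq0 hq1 hw2, Complex.log_exp hw1.1 hw1.2.le]

lemma qDigamma_eventually {t : ℝ} (ht : 0 < t) :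
    qDigamma q =ᶠ[nhds (t:ℂ)] fun w => -((Real.log (1 - q) : ℝ) : ℂ) - S1 q w := by
  filter_upwards [(log_qGamma_eventually hq0 hq1 ht).eventually_nhds,
    re_pos_eventually hq0 hq1 ht] with w hw hw2
  show qDigamma q w = _
  rw [qDigamma, Filter.EventuallyEq.deriv_eq hw]
  exact (hasDerivAt_Gq hq0 hq1 hw2).deriv

lemma qDigamma_at {t : ℝ} (ht : 0 < t) :
    qDigamma q (t:ℂ) = -((Real.log (1 - q) : ℝ) : ℂ) - S1 q (t:ℂ) :=
  (qDigamma_eventually hq0 hq1 ht).eq_of_nhds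

lemma deriv_qDigamma {t : ℝ} (ht : 0 < t) :
    deriv (qDigamma q) (t:ℂ) = -S2 q (t:ℂ) := by
  rw [Filter.EventuallyEq.deriv_eq (qDigamma_eventually hq0 hq1 ht)]
  have h : HasDerivAt (fun w => -((Real.log (1 - q) : ℝ) : ℂ) - S1 q w) (-(S2 q (t:ℂ))) (t:ℂ) :=
    (hasDerivAt_S1 hq0 hq1 (by simpa using ht)).const_sub _
  exact h.deriv

lemma S1_real {t : ℝ} (ht : 0 < t) :
    S1 q (t:ℂ) = ((∑' k : ℕ, -(Real.log q * (q ^ t * q ^ (k:ℕ))) / (1 - q ^ t * q ^ (k:ℕ)) : ℝ) : ℂ) := by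
  rw [Complex.ofReal_tsum]
  apply tsum_congr
  intro k
  have h1 : ((q:ℂ)) ^ (t:ℂ) * (q:ℂ) ^ (k:ℕ) = ((q ^ t * q ^ (k:ℕ) : ℝ) : ℂ) := by
    rw [← Complex.ofReal_cpow hq0.le]; push_cast; ring
  rw [h1]
  push_cast
  ring

lemma S2_real {t : ℝ} (ht : 0 < t) :
    S2 q (t:ℂ) = ((∑' k : ℕ, -(Real.log q ^ 2 * (q ^ t * q ^ (k:ℕ))) / (1 - q ^ t * q ^ (k:ℕ)) ^ 2 : ℝ) : ℂ) := by
  rw [Complex.ofReal_tsum]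
  apply tsum_congr
  intro k
  have h1 : ((q:ℂ)) ^ (t:ℂ) * (q:ℂ) ^ (k:ℕ) = ((q ^ t * q ^ (k:ℕ) : ℝ) : ℂ) := by
    rw [← Complex.ofReal_cpow hq0.le]; push_cast; ring
  rw [h1]
  push_cast
  ring

lemma summable_div1 {c : ℝ} (hc0 : 0 < c) (hc1 : c < 1) :
    Summable (fun k : ℕ => c * q ^ (k:ℕ) / (1 - c * q ^ (k:ℕ))) := by
  refine Summable.of_nonneg_of_le (fun k => ?_) (fun k => ?_)
    ((summable_geometric_of_lt_one hq0.le hq1).mul_left (c / (1 - c)))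
  · have hk0 : (0:ℝ) < q ^ (k:ℕ) := pow_pos hq0 k
    have hk1 : q ^ (k:ℕ) ≤ 1 := pow_le_one₀ hq0.le hq1.le
    have : c * q ^ (k:ℕ) < 1 := by nlinarith
    exact div_nonneg (by positivity) (by linarith)
  · have hk0 : (0:ℝ) < q ^ (k:ℕ) := pow_pos hq0 k
    have hk1 : q ^ (k:ℕ) ≤ 1 := pow_le_one₀ hq0.le hq1.le
    have h1 : 1 - c ≤ 1 - c * q ^ (k:ℕ) := by nlinarith
    have h2 : (0:ℝ) < 1 - c := by linarith
    have hs : c / (1 - c) * (1 - c) = c := div_mul_cancel₀ _ h2.ne'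
    have hs0 : (0:ℝ) ≤ c / (1 - c) := by positivity
    rw [div_le_iff₀ (by linarith)]
    nlinarith [mul_nonneg (mul_nonneg hs0 hk0.le) (sub_nonneg.mpr h1)]

lemma summable_div2 {c : ℝ} (hc0 : 0 < c) (hc1 : c < 1) :
    Summable (fun k : ℕ => c * q ^ (k:ℕ) / (1 - c * q ^ (k:ℕ)) ^ 2) := by
  refine Summable.of_nonneg_of_le (fun k => ?_) (fun k => ?_)
    ((summable_geometric_of_lt_one hq0.le hq1).mul_left (c / (1 - c) ^ 2))
  · have hk0 : (0:ℝ) < q ^ (k:ℕ) := pow_pos hq0 k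
    have hk1 : q ^ (k:ℕ) ≤ 1 := pow_le_one₀ hq0.le hq1.le
    have : c * q ^ (k:ℕ) < 1 := by nlinarith
    exact div_nonneg (by positivity) (by positivity)
  · have hk0 : (0:ℝ) < q ^ (k:ℕ) := pow_pos hq0 k
    have hk1 : q ^ (k:ℕ) ≤ 1 := pow_le_one₀ hq0.le hq1.le
    have h1 : 1 - c ≤ 1 - c * q ^ (k:ℕ) := by nlinarith
    have h2 : (0:ℝ) < 1 - c := by linarith
    have h3 : (1 - c) ^ 2 ≤ (1 - c * q ^ (k:ℕ)) ^ 2 := by nlinarith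
    have hs : c / (1 - c) ^ 2 * (1 - c) ^ 2 = c := div_mul_cancel₀ _ (by positivity)
    have hs0 : (0:ℝ) ≤ c / (1 - c) ^ 2 := by positivity
    rw [div_le_iff₀ (lt_of_lt_of_le (pow_pos h2 2) h3)]
    nlinarith [mul_nonneg (mul_nonneg hs0 hk0.le) (sub_nonneg.mpr h3)]

end QDG

theorem f_sub_g_pos (q θ α : ℝ) (hq0 : 0 < q) (hq1 : q < 1) (hθ : 0 < θ)
    (hα0 : 0 < α) (hα : α < q ^ θ) :
    0 < (fC q θ - gC q θ α).re ∧ (fC q θ - gC q θ α).im = 0 := by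
  have hL : Real.log q < 0 := Real.log_neg hq0 hq1
  have hL0 : Real.log q ≠ 0 := ne_of_lt hL
  have hqθ0 : (0:ℝ) < q ^ θ := Real.rpow_pos_of_pos hq0 θ
  have hqθ1 : q ^ θ < 1 := Real.rpow_lt_one hq0.le hq1 hθ
  have hα1 : α < 1 := lt_trans hα hqθ1
  have hA0 : 0 < Aq q α := by
    have hlogα : Real.log α < 0 := Real.log_neg hα0 hα1
    rw [Aq]
    exact div_pos_of_neg_of_neg hlogα hL
  have hqA : q ^ Aq q α = α := by
    rw [Aq, Real.rpow_def_of_pos hq0,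
      show Real.log q * (Real.log α / Real.log q) = Real.log α by field_simp]
    exact Real.exp_log hα0
  -- values of qDigamma and its derivative
  have hD : deriv (qDigamma q) (θ:ℂ)
      = ((-∑' k : ℕ, -(Real.log q ^ 2 * (q ^ θ * q ^ (k:ℕ))) / (1 - q ^ θ * q ^ (k:ℕ)) ^ 2 : ℝ) : ℂ) := by
    rw [QDG.deriv_qDigamma hq0 hq1 hθ, QDG.S2_real hq0 hq1 hθ]
    push_cast
    ring
  have hΨθ : qDigamma q (θ:ℂ)
      = ((-Real.log (1 - q) - ∑' k : ℕ, -(Real.log q * (q ^ θ * q ^ (k:ℕ))) / (1 - q ^ θ * q ^ (k:ℕ)) : ℝ) : ℂ) := by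
    rw [QDG.qDigamma_at hq0 hq1 hθ, QDG.S1_real hq0 hq1 hθ]
    push_cast
    ring
  have hΨA : qDigamma q ((Aq q α : ℝ) : ℂ)
      = ((-Real.log (1 - q) - ∑' k : ℕ, -(Real.log q * (α * q ^ (k:ℕ))) / (1 - α * q ^ (k:ℕ)) : ℝ) : ℂ) := by
    have h1 := QDG.qDigamma_at hq0 hq1 hA0
    have h2 := QDG.S1_real hq0 hq1 hA0
    simp only [hqA] at h2
    rw [h1, h2]
    push_cast
    ring
  -- names for the three real series
  set T2 : ℝ := ∑' k : ℕ, q ^ θ * q ^ (k:ℕ) / (1 - q ^ θ * q ^ (k:ℕ)) ^ 2 with hT2def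
  set T1x : ℝ := ∑' k : ℕ, q ^ θ * q ^ (k:ℕ) / (1 - q ^ θ * q ^ (k:ℕ)) with hT1xdef
  set T1y : ℝ := ∑' k : ℕ, α * q ^ (k:ℕ) / (1 - α * q ^ (k:ℕ)) with hT1ydef
  have hsum2 := QDG.summable_div2 hq0 hq1 hqθ0 hqθ1
  have hsum1x := QDG.summable_div1 hq0 hq1 hqθ0 hqθ1
  have hsum1y := QDG.summable_div1 hq0 hq1 hα0 hα1
  have hD2 : (∑' k : ℕ, -(Real.log q ^ 2 * (q ^ θ * q ^ (k:ℕ))) / (1 - q ^ θ * q ^ (k:ℕ)) ^ 2)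
      = -(Real.log q ^ 2) * T2 := by
    rw [hT2def, ← tsum_mul_left]
    exact tsum_congr fun k => by ring
  have hD1x : (∑' k : ℕ, -(Real.log q * (q ^ θ * q ^ (k:ℕ))) / (1 - q ^ θ * q ^ (k:ℕ)))
      = -(Real.log q) * T1x := by
    rw [hT1xdef, ← tsum_mul_left]
    exact tsum_congr fun k => by ring
  have hD1y : (∑' k : ℕ, -(Real.log q * (α * q ^ (k:ℕ))) / (1 - α * q ^ (k:ℕ)))
      = -(Real.log q) * T1y := by
    rw [hT1ydef, ← tsum_mul_left]
    exact tsum_congr fun k => by ring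
  have hcp : ((q:ℂ)) ^ (θ:ℂ) = ((q ^ θ : ℝ) : ℂ) := (Complex.ofReal_cpow hq0.le θ).symm
  have key : fC q θ - gC q θ α = ((T2 * (1 - α / q ^ θ) - T1x + T1y : ℝ) : ℂ) := by
    rw [fC, gC, hD, hΨθ, hΨA, hD2, hD1x, hD1y, hcp]
    have hLC : ((Real.log q : ℝ) : ℂ) ≠ 0 := by exact_mod_cast hL0
    have hqθC : ((q ^ θ : ℝ) : ℂ) ≠ 0 := by exact_mod_cast hqθ0.ne'
    push_cast
    field_simp
    ring
  rw [key]
  refine ⟨?_, by simp⟩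
  rw [Complex.ofReal_re]
  -- positivity of the real quantity
  have hterm : ∀ k : ℕ,
      q ^ θ * q ^ (k:ℕ) / (1 - q ^ θ * q ^ (k:ℕ)) ^ 2 * (1 - α / q ^ θ)
        - q ^ θ * q ^ (k:ℕ) / (1 - q ^ θ * q ^ (k:ℕ)) + α * q ^ (k:ℕ) / (1 - α * q ^ (k:ℕ))
      = (q ^ θ * q ^ (k:ℕ) - α * q ^ (k:ℕ)) ^ 2
          / ((1 - q ^ θ * q ^ (k:ℕ)) ^ 2 * (1 - α * q ^ (k:ℕ))) := by
    intro k
    have hk0 : (0:ℝ) < q ^ (k:ℕ) := pow_pos hq0 k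
    have hk1 : q ^ (k:ℕ) ≤ 1 := pow_le_one₀ hq0.le hq1.le
    have ha1 : q ^ θ * q ^ (k:ℕ) < 1 := by nlinarith
    have hb1 : α * q ^ (k:ℕ) < 1 := by nlinarith
    have hane : (1:ℝ) - q ^ θ * q ^ (k:ℕ) ≠ 0 := by intro h; nlinarith [h]
    have hbne : (1:ℝ) - α * q ^ (k:ℕ) ≠ 0 := by intro h; nlinarith [h]
    have hqne : q ^ θ ≠ 0 := hqθ0.ne'
    rw [div_mul_eq_mul_div, one_sub_div hqne, mul_div_assoc', div_div, div_sub_div _ _ (by positivity) hane,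
      div_add_div _ _ (by positivity) hbne, div_eq_div_iff (by positivity) (by positivity)]
    ring
  have hEq : T2 * (1 - α / q ^ θ) - T1x + T1y
      = ∑' k : ℕ, (q ^ θ * q ^ (k:ℕ) - α * q ^ (k:ℕ)) ^ 2
          / ((1 - q ^ θ * q ^ (k:ℕ)) ^ 2 * (1 - α * q ^ (k:ℕ))) := by
    rw [hT2def, hT1xdef, hT1ydef, ← tsum_mul_right, ← Summable.tsum_sub (hsum2.mul_right _) hsum1x,
      ← Summable.tsum_add ((hsum2.mul_right _).sub hsum1x) hsum1y]
    exact tsum_congr hterm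
  rw [hEq]
  have hsummh : Summable (fun k : ℕ => (q ^ θ * q ^ (k:ℕ) - α * q ^ (k:ℕ)) ^ 2
      / ((1 - q ^ θ * q ^ (k:ℕ)) ^ 2 * (1 - α * q ^ (k:ℕ)))) :=
    (((hsum2.mul_right _).sub hsum1x).add hsum1y).congr hterm
  refine Summable.tsum_pos hsummh (fun k => ?_) 0 ?_
  · have hk0 : (0:ℝ) < q ^ (k:ℕ) := pow_pos hq0 k
    have hk1 : q ^ (k:ℕ) ≤ 1 := pow_le_one₀ hq0.le hq1.le
    have ha1 : q ^ θ * q ^ (k:ℕ) < 1 := by nlinarith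
    have hb1 : α * q ^ (k:ℕ) < 1 := by nlinarith
    apply div_nonneg (sq_nonneg _)
    have h1 : (0:ℝ) < (1 - q ^ θ * q ^ (k:ℕ)) ^ 2 := pow_pos (by nlinarith) 2
    exact (mul_pos h1 (by nlinarith)).le
  · have h0 : (q:ℝ) ^ (0:ℕ) = 1 := pow_zero q
    rw [h0]
    have ha1 : q ^ θ * 1 < 1 := by nlinarith
    have hb1 : α * 1 < 1 := by nlinarith
    have hnum : (0:ℝ) < (q ^ θ * 1 - α * 1) ^ 2 := by nlinarith
    exact div_pos hnum (mul_pos (pow_pos (by linarith) 2) (by linarith))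
end
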